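/- Let B, C be categories, φ : F → G a transformation of type |α| —σ→ n ←τ— |β| and ψ : G → H a transformation of type |β| —η→ m ←θ— |γ|, both dinatural in all of their variables. If the composite graph Γ(ψ) ∘ Γ(φ) is acyclic, then the vertical composite ψ∘φ is dinatural in all of its variables. -/

import Mathlib

open CategoryTheory Opposite

universe v u v' u'

/-- `SignObj B s` is `B` if the sign `s` is `true` (covariant) and `Bᵒᵖ` if `s` is `false`. -/
def SignObj (B : Type u) : Bool → Type u
  | true => B
  | false => Bᵒᵖ

instance signObjCategory (B : Type u) [Category.{v} B] : ∀ s : Bool, Category.{v} (SignObj B s)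
  | true => inferInstanceAs (Category.{v} B)
  | false => inferInstanceAs (Category.{v} Bᵒᵖ)

/-- Interpret an object of `B` as an object of `B` or `Bᵒᵖ`, according to a sign. -/
def toSign {B : Type u} : ∀ s : Bool, B → SignObj B s
  | true, X => X
  | false, X => op X

/-- Forget the sign of an object. -/
def unSign {B : Type u} : ∀ {s : Bool}, SignObj B s → B
  | true, X => X
  | false, X => unop X

/-- A morphism of `B`, pointing in a direction prescribed by a sign. -/
def SignHom {B : Type u} [Category.{v} B] : Bool → B → B → Type v
  | true, X, Y => X ⟶ Y
  | false, X, Y => Y ⟶ X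

def toSignHom {B : Type u} [Category.{v} B] : ∀ {s : Bool} {X Y : B},
    SignHom s X Y → (toSign s X ⟶ toSign s Y)
  | true, _, _, f => f
  | false, _, _, f => f.op

def signId {B : Type u} [Category.{v} B] : ∀ (s : Bool) (X : B), SignHom s X X
  | true, X => 𝟙 X
  | false, X => 𝟙 X

/-- The mixed-variance power category `B^α`. -/
abbrev PowCat (B : Type u) [Category.{v} B] {κ : Type} (α : κ → Bool) : Type u :=
  ∀ j : κ, SignObj B (α j)

/-- The object of `B^α` whose `j`-th entry is `A (σ j)`. -/
abbrev tup {B : Type u} [Category.{v} B] {κ ι : Type} (α : κ → Bool) (σ : κ → ι)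
    (A : ι → B) : PowCat B α :=
  fun j => toSign (α j) (A (σ j))

/-- A transformation `φ : F → G` of type `σ, τ`: a family of morphisms
`φ_𝐀 : F (𝐀 σ) ⟶ G (𝐀 τ)` indexed by tuples `𝐀` of objects of `B`. -/
def Transf {B : Type u} [Category.{v} B] {C : Type u'} [Category.{v'} C] {κa κb ι : Type}
    (α : κa → Bool) (β : κb → Bool) (F : PowCat B α ⥤ C) (G : PowCat B β ⥤ C)
    (σ : κa → ι) (τ : κb → ι) : Type _ :=
  ∀ A : ι → B, F.obj (tup α σ A) ⟶ G.obj (tup β τ A)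

/-- The tuple `A` with its `i`-th entry replaced by `X`. -/
abbrev upd {ι : Type} [DecidableEq ι] {B : Type u} (A : ι → B) (i : ι) (X : B) : ι → B :=
  fun k => if k = i then X else A k

/-- The mixed-variance tuple `𝐀[X,Y/i]σ`: entries over the `i`-th variable are
`e false` in contravariant positions, `e true` in covariant ones. -/
abbrev tupMV {B : Type u} [Category.{v} B] {κ ι : Type} [DecidableEq ι] (α : κ → Bool)
    (σ : κ → ι) (A : ι → B) (i : ι) (e : Bool → B) : PowCat B α :=
  fun j => toSign (α j) (if σ j = i then e (α j) else A (σ j))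

def mvHom {B : Type u} [Category.{v} B] {e₁ e₂ : Bool → B}
    (g : e₂ false ⟶ e₁ false) (h : e₁ true ⟶ e₂ true) :
    ∀ s : Bool, SignHom s (e₁ s) (e₂ s)
  | true => h
  | false => g

/-- The canonical morphism `tupMV α σ A i e₁ ⟶ tupMV α σ A i e₂` acting by `h` on
covariant entries over `i`, (the opposite of) `g` on contravariant entries over `i`, and
the identity elsewhere. -/
def tupMVHom {B : Type u} [Category.{v} B] {κ ι : Type} [DecidableEq ι] (α : κ → Bool)
    (σ : κ → ι) (A : ι → B) (i : ι) (e₁ e₂ : Bool → B)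
    (g : e₂ false ⟶ e₁ false) (h : e₁ true ⟶ e₂ true) :
    tupMV α σ A i e₁ ⟶ tupMV α σ A i e₂ :=
  fun j => toSignHom
    (show SignHom (α j) (if σ j = i then e₁ (α j) else A (σ j))
        (if σ j = i then e₂ (α j) else A (σ j)) from
      if hj : σ j = i then by simp only [if_pos hj]; exact mvHom g h (α j)
      else by simp only [if_neg hj]; exact signId (α j) (A (σ j)))

/-- Dinaturality of a transformation in its `i`-th variable. -/
def DinatAt {B : Type u} [Category.{v} B] {C : Type u'} [Category.{v'} C] {κa κb ι : Type}
    [DecidableEq ι] {α : κa → Bool} {β : κb → Bool} {F : PowCat B α ⥤ C} {G : PowCat B β ⥤ C}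
    {σ : κa → ι} {τ : κb → ι} (φ : Transf α β F G σ τ) (i : ι) : Prop :=
  ∀ (A : ι → B) {X Y : B} (f : X ⟶ Y),
    F.map (tupMVHom α σ A i (fun s => bif s then X else Y) (fun _ => X) f (𝟙 X)) ≫
        φ (upd A i X) ≫
        G.map (tupMVHom β τ A i (fun _ => X) (fun s => bif s then Y else X) (𝟙 X) f) =
      F.map (tupMVHom α σ A i (fun s => bif s then X else Y) (fun _ => Y) (𝟙 Y) f) ≫
        φ (upd A i Y) ≫
        G.map (tupMVHom β τ A i (fun _ => Y) (fun s => bif s then Y else X) f (𝟙 Y))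

/-- Vertical composition of transformations along a cocone `ζ, ξ` on their types. -/
def vcomp {B : Type u} [Category.{v} B] {C : Type u'} [Category.{v'} C]
    {κa κb κc ι₁ ι₂ ι : Type} {α : κa → Bool} {β : κb → Bool} {γ : κc → Bool}
    {F : PowCat B α ⥤ C} {G : PowCat B β ⥤ C} {H : PowCat B γ ⥤ C}
    {σ : κa → ι₁} {τ : κb → ι₁} {η : κb → ι₂} {θ : κc → ι₂}
    (φ : Transf α β F G σ τ) (ψ : Transf β γ G H η θ)
    (ζ : ι₁ → ι) (ξ : ι₂ → ι) (hcomm : ∀ p, ζ (τ p) = ξ (η p)) :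
    Transf α γ F H (fun p => ζ (σ p)) (fun p => ξ (θ p)) :=
  fun A =>
    φ (fun x => A (ζ x)) ≫
      eqToHom (congrArg G.obj (by
        funext j
        show toSign (β j) (A (ζ (τ j))) = toSign (β j) (A (ξ (η j)))
        rw [hcomm j])) ≫
      ψ (fun x => A (ξ x))

section CompositeGraph

/-- Vertices of the composite graph `Γ(ψ) ∘ Γ(φ)`: the places are the arguments of the
three functors involved (with the middle ones identified), the transitions are the
variables of the two transformations. -/
abbrev CGV (wa wb wc n m : ℕ) : Type :=
  (Fin wa ⊕ Fin wb ⊕ Fin wc) ⊕ (Fin n ⊕ Fin m)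

variable {wa wb wc n m l : ℕ}

/-- The arcs of the composite graph `Γ(ψ) ∘ Γ(φ)` of two consecutive transformations of
types `σ₁, τ₁` and `σ₂, τ₂` between functors of variances `α, β` and `β, γ`. -/
def compArc (α : Fin wa → Bool) (β : Fin wb → Bool) (γ : Fin wc → Bool)
    (σ₁ : Fin wa → Fin n) (τ₁ : Fin wb → Fin n)
    (σ₂ : Fin wb → Fin m) (τ₂ : Fin wc → Fin m) :
    CGV wa wb wc n m → CGV wa wb wc n m → Prop
  | .inl (.inl p), .inr (.inl t) => σ₁ p = t ∧ α p = true
  | .inr (.inl t), .inl (.inl p) => σ₁ p = t ∧ α p = false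
  | .inl (.inr (.inl p)), .inr (.inl t) => τ₁ p = t ∧ β p = false
  | .inr (.inl t), .inl (.inr (.inl p)) => τ₁ p = t ∧ β p = true
  | .inl (.inr (.inl p)), .inr (.inr t) => σ₂ p = t ∧ β p = true
  | .inr (.inr t), .inl (.inr (.inl p)) => σ₂ p = t ∧ β p = false
  | .inl (.inr (.inr p)), .inr (.inr t) => τ₂ p = t ∧ γ p = false
  | .inr (.inr t), .inl (.inr (.inr p)) => τ₂ p = t ∧ γ p = true
  | _, _ => False

/-- The connected component (labelled by the pushout vertex `Fin l`) to which each
vertex of the composite graph belongs. -/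
def compOfV (σ₁ : Fin wa → Fin n) (τ₁ : Fin wb → Fin n)
    (σ₂ : Fin wb → Fin m) (τ₂ : Fin wc → Fin m)
    (ζ : Fin n → Fin l) (ξ : Fin m → Fin l) :
    CGV wa wb wc n m → Fin l
  | .inl (.inl p) => ζ (σ₁ p)
  | .inl (.inr (.inl p)) => ζ (τ₁ p)
  | .inl (.inr (.inr p)) => ξ (τ₂ p)
  | .inr (.inl t) => ζ t
  | .inr (.inr t) => ξ t

end CompositeGraph

section Machinery

variable {B : Type u} [Category.{v} B]

/-- Composition of sign-directed morphisms. -/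
def scomp : ∀ {s : Bool} {P Q R : B}, SignHom s P Q → SignHom s Q R → SignHom s P R
  | true, _, _, _, u, v => u ≫ v
  | false, _, _, _, u, v => v ≫ u

theorem toSignHom_scomp : ∀ {s : Bool} {P Q R : B} (u : SignHom s P Q) (v : SignHom s Q R),
    toSignHom (scomp u v) = toSignHom u ≫ toSignHom v
  | true, _, _, _, _, _ => rfl
  | false, _, _, _, _, _ => rfl

/-- A sign-directed morphism arising from an equality of objects. -/
def sEq (s : Bool) {P Q : B} (h : P = Q) : SignHom s P Q := h ▸ signId s P

theorem toSignHom_sEq (s : Bool) {P Q : B} (h : P = Q) (h' : toSign s P = toSign s Q) :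
    toSignHom (sEq s h) = eqToHom h' := by
  subst h
  rw [Subsingleton.elim h' rfl]
  cases s <;> rfl

theorem scomp_sEq_refl {s : Bool} {P Q : B} (u : SignHom s P Q) :
    scomp u (sEq s rfl) = u := by
  cases s <;> simp [scomp, sEq, signId]
  · exact Category.id_comp _
  · exact Category.comp_id _

theorem sEq_refl_scomp {s : Bool} {P Q : B} (u : SignHom s P Q) :
    scomp (sEq s rfl) u = u := by
  cases s <;> simp [scomp, sEq, signId]
  · exact Category.comp_id _
  · exact Category.id_comp _

/-- Componentwise morphism of `PowCat` objects built from sign-directed morphisms. -/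
def pmap {κ : Type} (δ : κ → Bool) (P Q : κ → B) (D : ∀ j, SignHom (δ j) (P j) (Q j)) :
    (fun j => toSign (δ j) (P j) : PowCat B δ) ⟶ (fun j => toSign (δ j) (Q j)) :=
  fun j => toSignHom (D j)

theorem pmap_comp {κ : Type} (δ : κ → Bool) (P Q R : κ → B)
    (D : ∀ j, SignHom (δ j) (P j) (Q j)) (D' : ∀ j, SignHom (δ j) (Q j) (R j)) :
    pmap δ P Q D ≫ pmap δ Q R D' = pmap δ P R (fun j => scomp (D j) (D' j)) := by
  funext j
  exact (toSignHom_scomp (D j) (D' j)).symm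

theorem pmap_ext {κ : Type} (δ : κ → Bool) (P Q : κ → B)
    (D D' : ∀ j, SignHom (δ j) (P j) (Q j)) (h : ∀ j, D j = D' j) :
    pmap δ P Q D = pmap δ P Q D' := by
  funext j; show toSignHom (D j) = toSignHom (D' j); rw [h j]

theorem eqToHom_pi {κ : Type} (δ : κ → Bool) (O₁ O₂ : PowCat B δ) (h : O₁ = O₂) (j : κ) :
    (eqToHom h : O₁ ⟶ O₂) j = eqToHom (congrFun h j) := by
  subst h; rfl

theorem pmap_sEq {κ : Type} (δ : κ → Bool) (P Q : κ → B) (h : ∀ j, P j = Q j)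
    (h' : (fun j => toSign (δ j) (P j) : PowCat B δ) = fun j => toSign (δ j) (Q j)) :
    pmap δ P Q (fun j => sEq (δ j) (h j)) = eqToHom h' := by
  funext j
  rw [eqToHom_pi δ _ _ h' j]
  exact toSignHom_sEq (δ j) (h j) _

/-- A sign-directed morphism between two `ite`s, built by cases on the (equivalent)
conditions. -/
def condS {c₁ c₂ : Prop} [i₁ : Decidable c₁] [i₂ : Decidable c₂] (hcc : c₁ ↔ c₂)
    (s : Bool) {PT QT PF QF : B}
    (dT : c₁ → SignHom s PT QT) (dF : ¬c₁ → SignHom s PF QF) :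
    SignHom s (if c₁ then PT else PF) (if c₂ then QT else QF) :=
  match i₁, i₂ with
  | isTrue h, isTrue _ => dT h
  | isFalse h, isFalse _ => dF h
  | isTrue h, isFalse h₂ => absurd (hcc.1 h) h₂
  | isFalse h, isTrue h₂ => absurd (hcc.2 h₂) h


/-- Transport of sign-directed morphisms along equalities of endpoints. -/
def sCast {s : Bool} {P P' Q Q' : B} (hP : P = P') (hQ : Q = Q') (u : SignHom s P Q) :
    SignHom s P' Q' := hP ▸ hQ ▸ u

theorem sCast_heq {s : Bool} {P P' Q Q' : B} (hP : P = P') (hQ : Q = Q') (u : SignHom s P Q) :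
    HEq (sCast hP hQ u) u := by subst hP; subst hQ; rfl

theorem eq_of_scast_heq {s : Bool} {P P' Q Q' : B} (hP : P = P') (hQ : Q = Q')
    {u : SignHom s P Q} {v : SignHom s P' Q'} (h : HEq v u) : v = sCast hP hQ u := by
  subst hP; subst hQ; exact eq_of_heq h

theorem eqmpr_eq_sCast {s : Bool} {P P' Q Q' : B}
    (pf : SignHom s P' Q' = SignHom s P Q) (hP : P = P') (hQ : Q = Q') (v : SignHom s P Q) :
    Eq.mpr pf v = sCast hP hQ v := by
  subst hP; subst hQ; rw [Subsingleton.elim pf rfl]; rfl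

theorem scomp_hcongr {s : Bool} {P Q R P' Q' R' : B} (hP : P = P') (hQ : Q = Q') (hR : R = R')
    {u : SignHom s P Q} {v : SignHom s Q R} {u' : SignHom s P' Q'} {v' : SignHom s Q' R'}
    (hu : HEq u u') (hv : HEq v v') : HEq (scomp u v) (scomp u' v') := by
  subst hP; subst hQ; subst hR; rw [eq_of_heq hu, eq_of_heq hv]

theorem sEq_heq {s : Bool} {P Q : B} (h : P = Q) : HEq (sEq s h) (signId s P) := by
  subst h; rfl

theorem condS_pos {c₁ c₂ : Prop} [i₁ : Decidable c₁] [i₂ : Decidable c₂] (hcc : c₁ ↔ c₂)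
    (s : Bool) {PT QT PF QF : B} (dT : c₁ → SignHom s PT QT) (dF : ¬c₁ → SignHom s PF QF)
    (h : c₁) :
    condS hcc s dT dF = sCast (if_pos h).symm (if_pos (hcc.1 h)).symm (dT h) := by
  unfold condS
  cases i₁ with
  | isTrue h' => cases i₂ with
    | isTrue h₂ => rfl
    | isFalse h₂ => exact absurd (hcc.1 h') h₂
  | isFalse h' => exact absurd h h'

theorem condS_neg {c₁ c₂ : Prop} [i₁ : Decidable c₁] [i₂ : Decidable c₂] (hcc : c₁ ↔ c₂)
    (s : Bool) {PT QT PF QF : B} (dT : c₁ → SignHom s PT QT) (dF : ¬c₁ → SignHom s PF QF)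
    (h : ¬c₁) :
    condS hcc s dT dF = sCast (if_neg h).symm (if_neg (fun h₂ => h (hcc.2 h₂))).symm (dF h) := by
  unfold condS
  cases i₁ with
  | isTrue h' => exact absurd h' h
  | isFalse h' => cases i₂ with
    | isTrue h₂ => exact absurd (hcc.2 h₂) h'
    | isFalse h₂ => rfl

end Machinery
section MainDefs

variable {B : Type u} [Category.{v} B] {C : Type u'} [Category.{v'} C]
  {wa wb wc n m l : ℕ}

/-- The value `X` or `Y` according to a Bool. -/
def bv (X Y : B) (b : Bool) : B := bif b then Y else X

/-- Morphisms `X ⟶ X`, `X ⟶ Y`, `Y ⟶ Y` generated by `f`. -/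
def bh {X Y : B} (f : X ⟶ Y) : ∀ (b₁ b₂ : Bool), (b₁ = true → b₂ = true) →
    (bv X Y b₁ ⟶ bv X Y b₂)
  | false, false, _ => 𝟙 X
  | false, true, _ => f
  | true, true, _ => 𝟙 Y
  | true, false, h => absurd (h rfl) (by simp)

/-- Sign-directed version of `bh`. -/
def sbv {X Y : B} (f : X ⟶ Y) (b₁ b₂ : Bool) :
    ∀ s : Bool, (s = true → b₁ = true → b₂ = true) → (s = false → b₂ = true → b₁ = true) →
      SignHom s (bv X Y b₁) (bv X Y b₂)
  | true, h, _ => bh f b₁ b₂ (h rfl)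
  | false, _, h => bh f b₂ b₁ (h rfl)

/-- Boundary-source entry morphisms. -/
def srcS {X Y : B} (f : X ⟶ Y) (b : Bool) :
    ∀ s : Bool, SignHom s (bif s then X else Y) (bv X Y b)
  | true => bh f false b (by simp)
  | false => bh f b true (fun _ => rfl)

/-- Boundary-target entry morphisms. -/
def tgtS {X Y : B} (f : X ⟶ Y) (b : Bool) :
    ∀ s : Bool, SignHom s (bv X Y b) (bif s then Y else X)
  | true => bh f b true (fun _ => rfl)
  | false => bh f false b (by simp)

variable (ζ : Fin n → Fin l) (ξ : Fin m → Fin l) (i : Fin l) (A : Fin l → B) (X Y : B)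

/-- The tuple of values of the variables of `φ`, given a firing state `p`. -/
def vn (p : Fin n → Bool) : Fin n → B :=
  fun x => if ζ x = i then bv X Y (p x) else A (ζ x)

/-- The tuple of values of the variables of `ψ`, given a firing state `q`. -/
def vm (q : Fin m → Bool) : Fin m → B :=
  fun y => if ξ y = i then bv X Y (q y) else A (ξ y)

variable {α : Fin wa → Bool} {β : Fin wb → Bool} {γ : Fin wc → Bool}
  (σ₁ : Fin wa → Fin n) (τ₁ : Fin wb → Fin n) (σ₂ : Fin wb → Fin m) (τ₂ : Fin wc → Fin m)

/-- Validity of a pair of firing states. -/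
def Valid' {n m l wb : ℕ} (ζ : Fin n → Fin l) (i : Fin l) (β : Fin wb → Bool)
    (τ₁ : Fin wb → Fin n) (σ₂ : Fin wb → Fin m)
    (p : Fin n → Bool) (q : Fin m → Bool) : Prop :=
  ∀ j : Fin wb, ζ (τ₁ j) = i →
    ((β j = true → p (τ₁ j) = true → q (σ₂ j) = true) ∧
     (β j = false → q (σ₂ j) = true → p (τ₁ j) = true))

variable {X Y} (f : X ⟶ Y)

/-- Entry family: boundary source to `φ`'s input. -/
def DaSrc (α : Fin wa → Bool) (p : Fin n → Bool) (j : Fin wa) :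
    SignHom (α j) (if ζ (σ₁ j) = i then (bif α j then X else Y) else A (ζ (σ₁ j)))
      (vn ζ i A X Y p (σ₁ j)) :=
  condS Iff.rfl (α j) (fun _ => srcS f (p (σ₁ j)) (α j))
    (fun _ => signId (α j) (A (ζ (σ₁ j))))

/-- Entry family: `ψ`'s output to boundary target. -/
def DcTgt (γ : Fin wc → Bool) (q : Fin m → Bool) (j : Fin wc) :
    SignHom (γ j) (vm ξ i A X Y q (τ₂ j))
      (if ξ (τ₂ j) = i then (bif γ j then Y else X) else A (ξ (τ₂ j))) :=
  condS Iff.rfl (γ j) (fun _ => tgtS f (q (τ₂ j)) (γ j))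
    (fun _ => signId (γ j) (A (ξ (τ₂ j))))

/-- Entry family: the middle leg, from `φ`'s output to `ψ`'s input. -/
def Dmid (β : Fin wb → Bool) (hcomm : ∀ j, ζ (τ₁ j) = ξ (σ₂ j))
    (p : Fin n → Bool) (q : Fin m → Bool) (hv : Valid' ζ i β τ₁ σ₂ p q) (j : Fin wb) :
    SignHom (β j) (vn ζ i A X Y p (τ₁ j)) (vm ξ i A X Y q (σ₂ j)) :=
  condS (c₁ := ζ (τ₁ j) = i) (c₂ := ξ (σ₂ j) = i) (by rw [hcomm j]) (β j)
    (fun h => sbv f (p (τ₁ j)) (q (σ₂ j)) (β j)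
      (fun hs => (hv j h).1 hs) (fun hs => (hv j h).2 hs))
    (fun _ => sEq (β j) (congrArg A (hcomm j)))

variable {F : PowCat B α ⥤ C} {G : PowCat B β ⥤ C} {H : PowCat B γ ⥤ C}

/-- The hybrid morphism associated to a pair of firing states. -/
def MM (φ : Transf α β F G σ₁ τ₁) (ψ : Transf β γ G H σ₂ τ₂)
    (hcomm : ∀ j, ζ (τ₁ j) = ξ (σ₂ j))
    (p : Fin n → Bool) (q : Fin m → Bool) (hv : Valid' ζ i β τ₁ σ₂ p q) :
    F.obj (tupMV α (fun j => ζ (σ₁ j)) A i (fun s => bif s then X else Y)) ⟶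
      H.obj (tupMV γ (fun j => ξ (τ₂ j)) A i (fun s => bif s then Y else X)) :=
  F.map (pmap α _ _ (DaSrc ζ i A σ₁ f α p)) ≫ φ (vn ζ i A X Y p) ≫
    G.map (pmap β _ _ (Dmid ζ ξ i A τ₁ σ₂ f β hcomm p q hv)) ≫ ψ (vm ξ i A X Y q) ≫
    H.map (pmap γ _ _ (DcTgt ξ i A τ₂ f γ q))

end MainDefs
section Bridge

variable {B : Type u} [Category.{v} B]

theorem tupMVHom_app_pos {κ ι : Type} [DecidableEq ι] (α : κ → Bool) (σ : κ → ι) (A : ι → B)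
    (i : ι) (e₁ e₂ : Bool → B) (g : e₂ false ⟶ e₁ false) (h : e₁ true ⟶ e₂ true) (j : κ)
    (hj : σ j = i) :
    tupMVHom α σ A i e₁ e₂ g h j =
      toSignHom (sCast (if_pos hj).symm (if_pos hj).symm (mvHom g h (α j))) := by
  simp only [tupMVHom, dif_pos hj]
  exact congrArg toSignHom (eqmpr_eq_sCast _ _ _ _)

theorem tupMVHom_app_neg {κ ι : Type} [DecidableEq ι] (α : κ → Bool) (σ : κ → ι) (A : ι → B)
    (i : ι) (e₁ e₂ : Bool → B) (g : e₂ false ⟶ e₁ false) (h : e₁ true ⟶ e₂ true) (j : κ)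
    (hj : ¬ σ j = i) :
    tupMVHom α σ A i e₁ e₂ g h j =
      toSignHom (sCast (if_neg hj).symm (if_neg hj).symm (signId (α j) (A (σ j)))) := by
  simp only [tupMVHom, dif_neg hj]
  exact congrArg toSignHom (eqmpr_eq_sCast _ _ _ _)

theorem scomp_sEq_heq {s : Bool} {P Q R : B} (u : SignHom s P Q) (h : Q = R) :
    HEq (scomp u (sEq s h)) u := by
  subst h; exact heq_of_eq (scomp_sEq_refl u)

theorem sEq_scomp_heq {s : Bool} {P Q R : B} (h : P = Q) (u : SignHom s Q R) :
    HEq (scomp (sEq s h) u) u := by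
  subst h; exact heq_of_eq (sEq_refl_scomp u)

theorem signId_hcongr {s : Bool} {P Q : B} (h : P = Q) : HEq (signId s P) (signId s Q) := by
  subst h; rfl

variable {X Y : B} (f : X ⟶ Y)

theorem mvHom_srcS_false (s : Bool) :
    HEq (mvHom (e₁ := fun s => bif s then X else Y) (e₂ := fun _ => X) f (𝟙 X) s)
      (srcS f false s) := by cases s <;> rfl

theorem mvHom_srcS_true (s : Bool) :
    HEq (mvHom (e₁ := fun s => bif s then X else Y) (e₂ := fun _ => Y) (𝟙 Y) f s)
      (srcS f true s) := by cases s <;> rfl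

theorem mvHom_tgtS_false (s : Bool) :
    HEq (mvHom (e₁ := fun _ => X) (e₂ := fun s => bif s then Y else X) (𝟙 X) f s)
      (tgtS f false s) := by cases s <;> rfl

theorem mvHom_tgtS_true (s : Bool) :
    HEq (mvHom (e₁ := fun _ => Y) (e₂ := fun s => bif s then Y else X) f (𝟙 Y) s)
      (tgtS f true s) := by cases s <;> rfl

theorem sbv_signId (b : Bool) (s : Bool) (h1 : s = true → b = true → b = true)
    (h2 : s = false → b = true → b = true) :
    HEq (sbv f b b s h1 h2) (signId s (bv X Y b)) := by
  cases s <;> cases b <;> exact HEq.rfl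

end Bridge
section Endpoints

variable {B : Type u} [Category.{v} B] {C : Type u'} [Category.{v'} C]
  {wa wb wc n m l : ℕ}
  {α : Fin wa → Bool} {β : Fin wb → Bool} {γ : Fin wc → Bool}
  {F : PowCat B α ⥤ C} {G : PowCat B β ⥤ C} {H : PowCat B γ ⥤ C}
  (ζ : Fin n → Fin l) (ξ : Fin m → Fin l) (i : Fin l) (A : Fin l → B) {X Y : B} (f : X ⟶ Y)
  (σ₁ : Fin wa → Fin n) (τ₁ : Fin wb → Fin n) (σ₂ : Fin wb → Fin m) (τ₂ : Fin wc → Fin m)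
  (φ : Transf α β F G σ₁ τ₁) (ψ : Transf β γ G H σ₂ τ₂)

theorem src_eq_pmap_bot :
    tupMVHom α (fun j => ζ (σ₁ j)) A i (fun s => bif s then X else Y) (fun _ => X) f (𝟙 X) =
      pmap α _ _ (DaSrc ζ i A σ₁ f α (fun _ => false)) := by
  funext j
  simp only [pmap]
  by_cases hj : ζ (σ₁ j) = i
  · rw [tupMVHom_app_pos (σ := fun j => ζ (σ₁ j)) (j := j) (hj := hj)]
    simp only [DaSrc]
    rw [condS_pos (h := hj)]
    exact congrArg toSignHom
      (eq_of_scast_heq _ _ ((sCast_heq _ _ _).trans (mvHom_srcS_false f (α j))))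
  · rw [tupMVHom_app_neg (σ := fun j => ζ (σ₁ j)) (j := j) (hj := hj)]
    simp only [DaSrc]
    rw [condS_neg (h := hj)]
    rfl

theorem src_eq_pmap_top :
    tupMVHom α (fun j => ζ (σ₁ j)) A i (fun s => bif s then X else Y) (fun _ => Y) (𝟙 Y) f =
      pmap α _ _ (DaSrc ζ i A σ₁ f α (fun _ => true)) := by
  funext j
  simp only [pmap]
  by_cases hj : ζ (σ₁ j) = i
  · rw [tupMVHom_app_pos (σ := fun j => ζ (σ₁ j)) (j := j) (hj := hj)]
    simp only [DaSrc]
    rw [condS_pos (h := hj)]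
    exact congrArg toSignHom
      (eq_of_scast_heq _ _ ((sCast_heq _ _ _).trans (mvHom_srcS_true f (α j))))
  · rw [tupMVHom_app_neg (σ := fun j => ζ (σ₁ j)) (j := j) (hj := hj)]
    simp only [DaSrc]
    rw [condS_neg (h := hj)]
    rfl

theorem tgt_eq_pmap_bot :
    tupMVHom γ (fun j => ξ (τ₂ j)) A i (fun _ => X) (fun s => bif s then Y else X) (𝟙 X) f =
      pmap γ _ _ (DcTgt ξ i A τ₂ f γ (fun _ => false)) := by
  funext j
  simp only [pmap]
  by_cases hj : ξ (τ₂ j) = i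
  · rw [tupMVHom_app_pos (σ := fun j => ξ (τ₂ j)) (j := j) (hj := hj)]
    simp only [DcTgt]
    rw [condS_pos (h := hj)]
    exact congrArg toSignHom
      (eq_of_scast_heq _ _ ((sCast_heq _ _ _).trans (mvHom_tgtS_false f (γ j))))
  · rw [tupMVHom_app_neg (σ := fun j => ξ (τ₂ j)) (j := j) (hj := hj)]
    simp only [DcTgt]
    rw [condS_neg (h := hj)]
    rfl

theorem tgt_eq_pmap_top :
    tupMVHom γ (fun j => ξ (τ₂ j)) A i (fun _ => Y) (fun s => bif s then Y else X) f (𝟙 Y) =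
      pmap γ _ _ (DcTgt ξ i A τ₂ f γ (fun _ => true)) := by
  funext j
  simp only [pmap]
  by_cases hj : ξ (τ₂ j) = i
  · rw [tupMVHom_app_pos (σ := fun j => ξ (τ₂ j)) (j := j) (hj := hj)]
    simp only [DcTgt]
    rw [condS_pos (h := hj)]
    exact congrArg toSignHom
      (eq_of_scast_heq _ _ ((sCast_heq _ _ _).trans (mvHom_tgtS_true f (γ j))))
  · rw [tupMVHom_app_neg (σ := fun j => ξ (τ₂ j)) (j := j) (hj := hj)]
    simp only [DcTgt]
    rw [condS_neg (h := hj)]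
    rfl

theorem vmid_const (hcomm : ∀ j, ζ (τ₁ j) = ξ (σ₂ j)) (b : Bool) (j : Fin wb) :
    vn ζ i A X Y (fun _ => b) (τ₁ j) = vm ξ i A X Y (fun _ => b) (σ₂ j) := by
  by_cases hj : ζ (τ₁ j) = i
  · rw [vn, vm, if_pos hj, if_pos ((hcomm j).symm.trans hj)]
  · rw [vn, vm, if_neg hj, if_neg (fun h => hj ((hcomm j).trans h)), hcomm j]

theorem Dmid_const (hcomm : ∀ j, ζ (τ₁ j) = ξ (σ₂ j)) (b : Bool)
    (hv : Valid' ζ i β τ₁ σ₂ (fun _ => b) (fun _ => b)) (j : Fin wb) :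
    Dmid ζ ξ i A τ₁ σ₂ f β hcomm (fun _ => b) (fun _ => b) hv j =
      sEq (β j) (vmid_const ζ ξ i A τ₁ σ₂ hcomm b j) := by
  by_cases hj : ζ (τ₁ j) = i
  · simp only [Dmid]
    rw [condS_pos (h := hj)]
    apply eq_of_heq
    refine ((sCast_heq _ _ _).trans ?_).trans (sEq_heq _).symm
    exact HEq.trans (sbv_signId f b (β j) _ _) (signId_hcongr
      (show bv X Y b = vn ζ i A X Y (fun _ => b) (τ₁ j) by rw [vn, if_pos hj]))
  · simp only [Dmid]
    rw [condS_neg (h := hj)]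
    apply eq_of_heq
    refine ((sCast_heq _ _ _).trans ?_).trans (sEq_heq _).symm
    refine (sEq_heq _).trans (signId_hcongr
      (show A (ζ (τ₁ j)) = vn ζ i A X Y (fun _ => b) (τ₁ j) by rw [vn, if_neg hj]))

theorem mid_eq_pmap (hcomm : ∀ j, ζ (τ₁ j) = ξ (σ₂ j)) (b : Bool)
    (hv : Valid' ζ i β τ₁ σ₂ (fun _ => b) (fun _ => b))
    (E : G.obj (tup β τ₁ (vn ζ i A X Y (fun _ => b))) =
        G.obj (tup β σ₂ (vm ξ i A X Y (fun _ => b)))) :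
    eqToHom E = G.map (pmap β _ _ (Dmid ζ ξ i A τ₁ σ₂ f β hcomm (fun _ => b) (fun _ => b) hv)) := by
  have h1 : pmap β _ _ (Dmid ζ ξ i A τ₁ σ₂ f β hcomm (fun _ => b) (fun _ => b) hv) =
      pmap β _ _ (fun j => sEq (β j) (vmid_const ζ ξ i A τ₁ σ₂ hcomm b j)) :=
    pmap_ext _ _ _ _ _ (Dmid_const ζ ξ i A f τ₁ σ₂ hcomm b hv)
  have h2 : (tup β τ₁ (vn ζ i A X Y (fun _ => b)) : PowCat B β) =
      tup β σ₂ (vm ξ i A X Y (fun _ => b)) := by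
    funext j
    exact congrArg (toSign (β j)) (vmid_const ζ ξ i A τ₁ σ₂ hcomm b j)
  rw [h1, pmap_sEq _ _ _ _ h2, eqToHom_map]

theorem MM_bot (hcomm : ∀ j, ζ (τ₁ j) = ξ (σ₂ j))
    (hv : Valid' ζ i β τ₁ σ₂ (fun _ => false) (fun _ => false)) :
    F.map (tupMVHom α (fun j => ζ (σ₁ j)) A i (fun s => bif s then X else Y) (fun _ => X) f (𝟙 X)) ≫
      vcomp φ ψ ζ ξ hcomm (upd A i X) ≫
      H.map (tupMVHom γ (fun j => ξ (τ₂ j)) A i (fun _ => X) (fun s => bif s then Y else X) (𝟙 X) f) =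
    MM ζ ξ i A σ₁ τ₁ σ₂ τ₂ f φ ψ hcomm (fun _ => false) (fun _ => false) hv := by
  rw [src_eq_pmap_bot ζ i A f σ₁, tgt_eq_pmap_bot ξ i A f τ₂]
  simp only [vcomp]
  erw [mid_eq_pmap ζ ξ i A f τ₁ σ₂ hcomm false hv _]
  simp only [MM, Category.assoc]
  exact congrArg _ (congrArg _ (Category.assoc _ _ _))

theorem MM_top (hcomm : ∀ j, ζ (τ₁ j) = ξ (σ₂ j))
    (hv : Valid' ζ i β τ₁ σ₂ (fun _ => true) (fun _ => true)) :
    F.map (tupMVHom α (fun j => ζ (σ₁ j)) A i (fun s => bif s then X else Y) (fun _ => Y) (𝟙 Y) f) ≫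
      vcomp φ ψ ζ ξ hcomm (upd A i Y) ≫
      H.map (tupMVHom γ (fun j => ξ (τ₂ j)) A i (fun _ => Y) (fun s => bif s then Y else X) f (𝟙 Y)) =
    MM ζ ξ i A σ₁ τ₁ σ₂ τ₂ f φ ψ hcomm (fun _ => true) (fun _ => true) hv := by
  rw [src_eq_pmap_top ζ i A f σ₁, tgt_eq_pmap_top ξ i A f τ₂]
  simp only [vcomp]
  erw [mid_eq_pmap ζ ξ i A f τ₁ σ₂ hcomm true hv _]
  simp only [MM, Category.assoc]
  exact congrArg _ (congrArg _ (Category.assoc _ _ _))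

end Endpoints
section MoreMachinery

variable {B : Type u} [Category.{v} B]

theorem scomp_signId' {s : Bool} {P Q : B} (u : SignHom s P Q) :
    scomp u (signId s Q) = u := by
  cases s <;> simp [scomp, signId]
  · exact Category.id_comp _
  · exact Category.comp_id _

theorem signId_scomp' {s : Bool} {P Q : B} (u : SignHom s P Q) :
    scomp (signId s P) u = u := by
  cases s <;> simp [scomp, signId]
  · exact Category.comp_id _
  · exact Category.id_comp _

theorem signId_sCast_scomp_heq {s : Bool} {P₀ P' Q' R : B} (h3 : P₀ = P') (h4 : P₀ = Q')
    (w : SignHom s Q' R) : HEq (scomp (sCast h3 h4 (signId s P₀)) w) w := by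
  subst h3; subst h4; exact heq_of_eq (signId_scomp' w)

theorem scomp_sCast_signId_heq {s : Bool} {P Q' R₀ R' : B} (h3 : R₀ = Q') (h4 : R₀ = R')
    (w : SignHom s P Q') : HEq (scomp w (sCast h3 h4 (signId s R₀))) w := by
  subst h3; subst h4; exact heq_of_eq (scomp_signId' w)

theorem pmap_comp_eqToHom {κ : Type} (δ : κ → Bool) (P Q R : κ → B)
    (D : ∀ j, SignHom (δ j) (P j) (Q j)) (hQR : ∀ j, Q j = R j)
    (E : (fun j => toSign (δ j) (Q j) : PowCat B δ) = fun j => toSign (δ j) (R j)) :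
    pmap δ P Q D ≫ eqToHom E = pmap δ P R (fun j => scomp (D j) (sEq (δ j) (hQR j))) := by
  rw [← pmap_sEq δ Q R hQR E, pmap_comp]

theorem eqToHom_comp_pmap {κ : Type} (δ : κ → Bool) (P Q R : κ → B)
    (D : ∀ j, SignHom (δ j) (Q j) (R j)) (hPQ : ∀ j, P j = Q j)
    (E : (fun j => toSign (δ j) (P j) : PowCat B δ) = fun j => toSign (δ j) (Q j)) :
    eqToHom E ≫ pmap δ Q R D = pmap δ P R (fun j => scomp (sEq (δ j) (hPQ j)) (D j)) := by
  rw [← pmap_sEq δ P Q hPQ E, pmap_comp]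

variable {C : Type u'} [Category.{v'} C]

theorem transf_conj {κa κb ι : Type} {α : κa → Bool} {β : κb → Bool}
    {F : PowCat B α ⥤ C} {G : PowCat B β ⥤ C} {σ : κa → ι} {τ : κb → ι}
    (φ : Transf α β F G σ τ) {V V' : ι → B} (h : V = V')
    (e₁ : F.obj (tup α σ V') = F.obj (tup α σ V))
    (e₂ : G.obj (tup β τ V) = G.obj (tup β τ V'))
    {Z : C} (W : G.obj (tup β τ V') ⟶ Z) :
    eqToHom e₁ ≫ φ V ≫ eqToHom e₂ ≫ W = φ V' ≫ W := by
  subst h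
  rw [Subsingleton.elim e₁ rfl, Subsingleton.elim e₂ rfl]
  simp

variable {X Y : B} (f : X ⟶ Y)

theorem srcS_hcongr {b b' : Bool} (h : b = b') (s : Bool) :
    HEq (srcS f b s) (srcS f b' s) := by subst h; rfl

theorem tgtS_hcongr {b b' : Bool} (h : b = b') (s : Bool) :
    HEq (tgtS f b s) (tgtS f b' s) := by subst h; rfl

theorem sbv_hcongr {b₁ b₂ b₁' b₂' : Bool} (h : b₁ = b₁') (h' : b₂ = b₂') (s : Bool)
    {p1 : s = true → b₁ = true → b₂ = true} {p2 : s = false → b₂ = true → b₁ = true}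
    {p1' : s = true → b₁' = true → b₂' = true} {p2' : s = false → b₂' = true → b₁' = true} :
    HEq (sbv f b₁ b₂ s p1 p2) (sbv f b₁' b₂' s p1' p2') := by subst h; subst h'; rfl

/-- Entry morphism at a middle place adjacent to a firing `φ`-transition. -/
def fireMid (b : Bool) (s : Bool) (hT : s = true → b = true) (hF : s = false → b = false) :
    SignHom s (bif s then Y else X) (bv X Y b) :=
  match s, hT, hF with
  | true, hT, _ => bh f true b (fun _ => hT rfl)
  | false, _, hF => bh f b false (fun hb => absurd ((hF rfl) ▸ hb) (by simp))

/-- Entry morphism at a middle place adjacent to a firing `ψ`-transition. -/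
def fireMid2 (b : Bool) (s : Bool) (hT : s = true → b = false) (hF : s = false → b = true) :
    SignHom s (bv X Y b) (bif s then X else Y) :=
  match s, hT, hF with
  | true, hT, _ => bh f b false (fun hb => absurd ((hT rfl) ▸ hb) (by simp))
  | false, _, hF => bh f true b (fun _ => hF rfl)

theorem sbv_fireX (b : Bool) (s : Bool) (p1 p2) (hT : s = true → b = true)
    (hF : s = false → b = false) :
    HEq (sbv f false b s p1 p2)
      (scomp (mvHom (e₁ := fun _ => X) (e₂ := fun s => bif s then Y else X) (𝟙 X) f s)
        (fireMid f b s hT hF)) := by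
  cases s <;> cases b
  · exact heq_of_eq (by simp [sbv, fireMid, mvHom, bh, scomp]; exact (Category.id_comp _).symm)
  · exact absurd (hF rfl) (by simp)
  · exact absurd (hT rfl) (by simp)
  · exact heq_of_eq (by simp [sbv, fireMid, mvHom, bh, scomp]; exact (Category.comp_id _).symm)

theorem sbv_fireY (b : Bool) (s : Bool) (p1 p2) (hT : s = true → b = true)
    (hF : s = false → b = false) :
    HEq (sbv f true b s p1 p2)
      (scomp (mvHom (e₁ := fun _ => Y) (e₂ := fun s => bif s then Y else X) f (𝟙 Y) s)
        (fireMid f b s hT hF)) := by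
  cases s <;> cases b
  · exact heq_of_eq (by simp [sbv, fireMid, mvHom, bh, scomp]; exact (Category.id_comp f).symm)
  · exact absurd (hF rfl) (by simp)
  · exact absurd (hT rfl) (by simp)
  · exact heq_of_eq (by simp [sbv, fireMid, mvHom, bh, scomp]; exact (Category.id_comp _).symm)

theorem sbv_fire2X (b : Bool) (s : Bool) (p1 p2) (hT : s = true → b = false)
    (hF : s = false → b = true) :
    HEq (sbv f b false s p1 p2)
      (scomp (fireMid2 f b s hT hF)
        (mvHom (e₁ := fun s => bif s then X else Y) (e₂ := fun _ => X) f (𝟙 X) s)) := by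
  cases s <;> cases b
  · exact absurd (hF rfl) (by simp)
  · exact heq_of_eq (by simp [sbv, fireMid2, mvHom, bh, scomp]; exact (Category.comp_id _).symm)
  · exact heq_of_eq (by simp [sbv, fireMid2, mvHom, bh, scomp]; exact (Category.id_comp _).symm)
  · exact absurd (hT rfl) (by simp)

theorem sbv_fire2Y (b : Bool) (s : Bool) (p1 p2) (hT : s = true → b = false)
    (hF : s = false → b = true) :
    HEq (sbv f b true s p1 p2)
      (scomp (fireMid2 f b s hT hF)
        (mvHom (e₁ := fun s => bif s then X else Y) (e₂ := fun _ => Y) (𝟙 Y) f s)) := by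
  cases s <;> cases b
  · exact absurd (hF rfl) (by simp)
  · exact heq_of_eq (by simp [sbv, fireMid2, mvHom, bh, scomp]; exact (Category.id_comp _).symm)
  · exact heq_of_eq (by simp [sbv, fireMid2, mvHom, bh, scomp]; exact (Category.id_comp f).symm)
  · exact absurd (hT rfl) (by simp)

end MoreMachinery
section StepPhi

variable {B : Type u} [Category.{v} B] {C : Type u'} [Category.{v'} C]
  {wa wb wc n m l : ℕ}
  {α : Fin wa → Bool} {β : Fin wb → Bool} {γ : Fin wc → Bool}
  {F : PowCat B α ⥤ C} {G : PowCat B β ⥤ C} {H : PowCat B γ ⥤ C}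
  (ζ : Fin n → Fin l) (ξ : Fin m → Fin l) (i : Fin l) (A : Fin l → B) {X Y : B} (f : X ⟶ Y)
  (σ₁ : Fin wa → Fin n) (τ₁ : Fin wb → Fin n) (σ₂ : Fin wb → Fin m) (τ₂ : Fin wc → Fin m)

/-- Boundary-to-hexagon entry family on the `F` side, for firing `x₀`. -/
def DaPart (p : Fin n → Bool) (x₀ : Fin n) (hζ : ζ x₀ = i) (j : Fin wa) :
    SignHom (α j) (if ζ (σ₁ j) = i then (bif α j then X else Y) else A (ζ (σ₁ j)))
      (if σ₁ j = x₀ then (bif α j then X else Y) else vn ζ i A X Y p (σ₁ j)) :=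
  if h : σ₁ j = x₀ then
    sCast (if_pos ((congrArg ζ h).trans hζ)).symm (if_pos h).symm
      (signId (α j) (bif α j then X else Y))
  else sCast rfl (if_neg h).symm (DaSrc ζ i A σ₁ f α p j)

theorem K1 (p : Fin n → Bool) (x₀ : Fin n) (hζ : ζ x₀ = i) (hp : p x₀ = false)
    (hUX : ∀ x, upd (vn ζ i A X Y p) x₀ X x = vn ζ i A X Y p x)
    (eFX : (tup α σ₁ (upd (vn ζ i A X Y p) x₀ X) : PowCat B α) = tup α σ₁ (vn ζ i A X Y p)) :
    pmap α _ _ (DaSrc ζ i A σ₁ f α p) =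
      pmap α _ _ (DaPart ζ i A f σ₁ p x₀ hζ) ≫
        tupMVHom α σ₁ (vn ζ i A X Y p) x₀ (fun s => bif s then X else Y) (fun _ => X) f (𝟙 X) ≫
        eqToHom eFX := by
  funext j
  show toSignHom (DaSrc ζ i A σ₁ f α p j) =
    toSignHom (DaPart ζ i A f σ₁ p x₀ hζ j) ≫
      tupMVHom α σ₁ (vn ζ i A X Y p) x₀ (fun s => bif s then X else Y) (fun _ => X) f (𝟙 X) j ≫
      (eqToHom eFX) j
  rw [eqToHom_pi α _ _ eFX j, ← toSignHom_sEq (α j) (hUX (σ₁ j)) (congrFun eFX j)]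
  by_cases hc : σ₁ j = x₀
  · rw [tupMVHom_app_pos α σ₁ (vn ζ i A X Y p) x₀ (fun s => bif s then X else Y) (fun _ => X) f (𝟙 X) j hc,
      ← toSignHom_scomp, ← toSignHom_scomp]
    apply congrArg toSignHom
    have hj : ζ (σ₁ j) = i := (congrArg ζ hc).trans hζ
    have hpj : p (σ₁ j) = false := (congrArg p hc).trans hp
    simp only [DaSrc, DaPart, dif_pos hc]
    rw [condS_pos (h := hj)]
    apply eq_of_heq
    refine HEq.symm (HEq.trans (HEq.trans (HEq.trans (HEq.trans (HEq.trans
      (scomp_hcongr rfl rfl (hUX (σ₁ j)).symm HEq.rfl (scomp_sEq_heq _ (hUX (σ₁ j))))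
      (signId_sCast_scomp_heq _ _ _))
      (sCast_heq _ _ _))
      (mvHom_srcS_false f (α j)))
      (srcS_hcongr f hpj.symm (α j)))
      (sCast_heq _ _ _).symm)
  · rw [tupMVHom_app_neg α σ₁ (vn ζ i A X Y p) x₀ (fun s => bif s then X else Y) (fun _ => X) f (𝟙 X) j hc,
      ← toSignHom_scomp, ← toSignHom_scomp]
    apply congrArg toSignHom
    simp only [DaPart, dif_neg hc]
    apply eq_of_heq
    refine HEq.symm (HEq.trans (HEq.trans
      (scomp_hcongr rfl rfl (hUX (σ₁ j)).symm HEq.rfl (scomp_sEq_heq _ (hUX (σ₁ j))))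
      (scomp_sCast_signId_heq _ _ _))
      (sCast_heq _ _ _))

theorem DaSrc_hcongr (p p' : Fin n → Bool) (j : Fin wa)
    (hpp : ζ (σ₁ j) = i → p (σ₁ j) = p' (σ₁ j)) :
    HEq (DaSrc ζ i A σ₁ f α p j) (DaSrc ζ i A σ₁ f α p' j) := by
  by_cases hj : ζ (σ₁ j) = i
  · simp only [DaSrc]
    rw [condS_pos (h := hj)]; rw [condS_pos (h := hj)]
    exact (sCast_heq _ _ _).trans ((srcS_hcongr f (hpp hj) (α j)).trans (sCast_heq _ _ _).symm)
  · simp only [DaSrc]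
    rw [condS_neg (h := hj)]; rw [condS_neg (h := hj)]
    exact (sCast_heq _ _ _).trans (sCast_heq _ _ _).symm

theorem DcTgt_hcongr (q q' : Fin m → Bool) (j : Fin wc)
    (hqq : ξ (τ₂ j) = i → q (τ₂ j) = q' (τ₂ j)) :
    HEq (DcTgt ξ i A τ₂ f γ q j) (DcTgt ξ i A τ₂ f γ q' j) := by
  by_cases hj : ξ (τ₂ j) = i
  · simp only [DcTgt]
    rw [condS_pos (h := hj)]; rw [condS_pos (h := hj)]
    exact (sCast_heq _ _ _).trans ((tgtS_hcongr f (hqq hj) (γ j)).trans (sCast_heq _ _ _).symm)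
  · simp only [DcTgt]
    rw [condS_neg (h := hj)]; rw [condS_neg (h := hj)]
    exact (sCast_heq _ _ _).trans (sCast_heq _ _ _).symm

theorem Dmid_hcongr (hcomm : ∀ j, ζ (τ₁ j) = ξ (σ₂ j)) (p p' : Fin n → Bool)
    (q q' : Fin m → Bool) (hv : Valid' ζ i β τ₁ σ₂ p q) (hv' : Valid' ζ i β τ₁ σ₂ p' q')
    (j : Fin wb) (hpp : ζ (τ₁ j) = i → p (τ₁ j) = p' (τ₁ j))
    (hqq : ζ (τ₁ j) = i → q (σ₂ j) = q' (σ₂ j)) :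
    HEq (Dmid ζ ξ i A τ₁ σ₂ f β hcomm p q hv j) (Dmid ζ ξ i A τ₁ σ₂ f β hcomm p' q' hv' j) := by
  by_cases hj : ζ (τ₁ j) = i
  · simp only [Dmid]
    rw [condS_pos (h := hj)]; rw [condS_pos (h := hj)]
    exact (sCast_heq _ _ _).trans
      ((sbv_hcongr f (hpp hj) (hqq hj) (β j)).trans (sCast_heq _ _ _).symm)
  · simp only [Dmid]
    rw [condS_neg (h := hj)]; rw [condS_neg (h := hj)]
    exact (sCast_heq _ _ _).trans (sCast_heq _ _ _).symm

theorem K1Y (p : Fin n → Bool) (x₀ : Fin n) (hζ : ζ x₀ = i)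
    (hUY : ∀ x, upd (vn ζ i A X Y p) x₀ Y x = vn ζ i A X Y (Function.update p x₀ true) x)
    (eFY : (tup α σ₁ (upd (vn ζ i A X Y p) x₀ Y) : PowCat B α) =
      tup α σ₁ (vn ζ i A X Y (Function.update p x₀ true))) :
    pmap α _ _ (DaSrc ζ i A σ₁ f α (Function.update p x₀ true)) =
      pmap α _ _ (DaPart ζ i A f σ₁ p x₀ hζ) ≫
        tupMVHom α σ₁ (vn ζ i A X Y p) x₀ (fun s => bif s then X else Y) (fun _ => Y) (𝟙 Y) f ≫
        eqToHom eFY := by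
  funext j
  show toSignHom (DaSrc ζ i A σ₁ f α (Function.update p x₀ true) j) =
    toSignHom (DaPart ζ i A f σ₁ p x₀ hζ j) ≫
      tupMVHom α σ₁ (vn ζ i A X Y p) x₀ (fun s => bif s then X else Y) (fun _ => Y) (𝟙 Y) f j ≫
      (eqToHom eFY) j
  rw [eqToHom_pi α _ _ eFY j, ← toSignHom_sEq (α j) (hUY (σ₁ j)) (congrFun eFY j)]
  by_cases hc : σ₁ j = x₀
  · rw [tupMVHom_app_pos α σ₁ (vn ζ i A X Y p) x₀ (fun s => bif s then X else Y) (fun _ => Y)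
      (𝟙 Y) f j hc, ← toSignHom_scomp, ← toSignHom_scomp]
    apply congrArg toSignHom
    have hj : ζ (σ₁ j) = i := (congrArg ζ hc).trans hζ
    have hpj : Function.update p x₀ true (σ₁ j) = true := by rw [hc]; simp
    simp only [DaSrc, DaPart, dif_pos hc]
    rw [condS_pos (h := hj)]
    apply eq_of_heq
    refine HEq.symm (HEq.trans (HEq.trans (HEq.trans (HEq.trans (HEq.trans
      (scomp_hcongr rfl rfl (hUY (σ₁ j)).symm HEq.rfl (scomp_sEq_heq _ (hUY (σ₁ j))))
      (signId_sCast_scomp_heq _ _ _))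
      (sCast_heq _ _ _))
      (mvHom_srcS_true f (α j)))
      (srcS_hcongr f hpj.symm (α j)))
      (sCast_heq _ _ _).symm)
  · rw [tupMVHom_app_neg α σ₁ (vn ζ i A X Y p) x₀ (fun s => bif s then X else Y) (fun _ => Y)
      (𝟙 Y) f j hc, ← toSignHom_scomp, ← toSignHom_scomp]
    apply congrArg toSignHom
    simp only [DaPart, dif_neg hc]
    apply eq_of_heq
    refine HEq.symm (HEq.trans (HEq.trans (HEq.trans
      (scomp_hcongr rfl rfl (hUY (σ₁ j)).symm HEq.rfl (scomp_sEq_heq _ (hUY (σ₁ j))))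
      (scomp_sCast_signId_heq _ _ _))
      (sCast_heq _ _ _))
      (DaSrc_hcongr ζ i A f σ₁ p (Function.update p x₀ true) j
        (fun _ => (Function.update_of_ne hc true p).symm)))

/-- Hexagon-to-`ψ` entry family on the middle, for firing `x₀`. -/
def DmPart (p : Fin n → Bool) (q : Fin m → Bool) (x₀ : Fin n) (hζ : ζ x₀ = i)
    (hq1 : ∀ j : Fin wb, τ₁ j = x₀ → β j = true → q (σ₂ j) = true)
    (hq0 : ∀ j : Fin wb, τ₁ j = x₀ → β j = false → q (σ₂ j) = false)
    (hv : Valid' ζ i β τ₁ σ₂ p q) (hcomm : ∀ j, ζ (τ₁ j) = ξ (σ₂ j)) (j : Fin wb) :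
    SignHom (β j) (if τ₁ j = x₀ then (bif β j then Y else X) else vn ζ i A X Y p (τ₁ j))
      (vm ξ i A X Y q (σ₂ j)) :=
  if h : τ₁ j = x₀ then
    sCast (if_pos h).symm
      (show bv X Y (q (σ₂ j)) = vm ξ i A X Y q (σ₂ j) by
        rw [vm, if_pos ((hcomm j).symm.trans ((congrArg ζ h).trans hζ))])
      (fireMid f (q (σ₂ j)) (β j) (fun hs => hq1 j h hs) (fun hs => hq0 j h hs))
  else sCast (if_neg h).symm rfl (Dmid ζ ξ i A τ₁ σ₂ f β hcomm p q hv j)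

theorem K2 (p : Fin n → Bool) (q : Fin m → Bool) (hv : Valid' ζ i β τ₁ σ₂ p q)
    (x₀ : Fin n) (hζ : ζ x₀ = i) (hp : p x₀ = false) (hcomm : ∀ j, ζ (τ₁ j) = ξ (σ₂ j))
    (hq1 : ∀ j : Fin wb, τ₁ j = x₀ → β j = true → q (σ₂ j) = true)
    (hq0 : ∀ j : Fin wb, τ₁ j = x₀ → β j = false → q (σ₂ j) = false)
    (hUX : ∀ x, vn ζ i A X Y p x = upd (vn ζ i A X Y p) x₀ X x)
    (eGX : (tup β τ₁ (vn ζ i A X Y p) : PowCat B β) =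
      tup β τ₁ (upd (vn ζ i A X Y p) x₀ X)) :
    pmap β _ _ (Dmid ζ ξ i A τ₁ σ₂ f β hcomm p q hv) =
      eqToHom eGX ≫
        tupMVHom β τ₁ (vn ζ i A X Y p) x₀ (fun _ => X) (fun s => bif s then Y else X) (𝟙 X) f ≫
        pmap β _ _ (DmPart ζ ξ i A f τ₁ σ₂ p q x₀ hζ hq1 hq0 hv hcomm) := by
  funext j
  show toSignHom (Dmid ζ ξ i A τ₁ σ₂ f β hcomm p q hv j) =
    (eqToHom eGX) j ≫
      tupMVHom β τ₁ (vn ζ i A X Y p) x₀ (fun _ => X) (fun s => bif s then Y else X) (𝟙 X) f j ≫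
      toSignHom (DmPart ζ ξ i A f τ₁ σ₂ p q x₀ hζ hq1 hq0 hv hcomm j)
  rw [eqToHom_pi β _ _ eGX j, ← toSignHom_sEq (β j) (hUX (τ₁ j)) (congrFun eGX j)]
  by_cases hc : τ₁ j = x₀
  · rw [tupMVHom_app_pos β τ₁ (vn ζ i A X Y p) x₀ (fun _ => X) (fun s => bif s then Y else X)
      (𝟙 X) f j hc, ← toSignHom_scomp, ← toSignHom_scomp]
    apply congrArg toSignHom
    have hj : ζ (τ₁ j) = i := (congrArg ζ hc).trans hζ
    have hpj : p (τ₁ j) = false := (congrArg p hc).trans hp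
    simp only [Dmid, DmPart, dif_pos hc]
    rw [condS_pos (h := hj)]
    apply eq_of_heq
    refine HEq.symm (HEq.trans (HEq.trans (HEq.trans (HEq.trans
      (sEq_scomp_heq (hUX (τ₁ j)) _)
      (scomp_hcongr (if_pos hc) (if_pos hc)
        (show vm ξ i A X Y q (σ₂ j) = bv X Y (q (σ₂ j)) by
          rw [vm, if_pos ((hcomm j).symm.trans hj)])
        (sCast_heq _ _ _) (sCast_heq _ _ _)))
      (sbv_fireX f (q (σ₂ j)) (β j) (fun hs _ => hq1 j hc hs)
        (fun hs hb => (hq0 j hc hs) ▸ hb) (fun hs => hq1 j hc hs) (fun hs => hq0 j hc hs)).symm)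
      (sbv_hcongr f hpj.symm rfl (β j)))
      (sCast_heq _ _ _).symm)
  · rw [tupMVHom_app_neg β τ₁ (vn ζ i A X Y p) x₀ (fun _ => X) (fun s => bif s then Y else X)
      (𝟙 X) f j hc, ← toSignHom_scomp, ← toSignHom_scomp]
    apply congrArg toSignHom
    simp only [DmPart, dif_neg hc]
    apply eq_of_heq
    refine HEq.symm (HEq.trans (HEq.trans
      (sEq_scomp_heq (hUX (τ₁ j)) _)
      (signId_sCast_scomp_heq _ _ _))
      (sCast_heq _ _ _))

theorem K2Y (p : Fin n → Bool) (q : Fin m → Bool) (x₀ : Fin n)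
    (hv : Valid' ζ i β τ₁ σ₂ p q)
    (hv' : Valid' ζ i β τ₁ σ₂ (Function.update p x₀ true) q)
    (hζ : ζ x₀ = i) (hcomm : ∀ j, ζ (τ₁ j) = ξ (σ₂ j))
    (hq1 : ∀ j : Fin wb, τ₁ j = x₀ → β j = true → q (σ₂ j) = true)
    (hq0 : ∀ j : Fin wb, τ₁ j = x₀ → β j = false → q (σ₂ j) = false)
    (hUY : ∀ x, vn ζ i A X Y (Function.update p x₀ true) x = upd (vn ζ i A X Y p) x₀ Y x)
    (eGY : (tup β τ₁ (vn ζ i A X Y (Function.update p x₀ true)) : PowCat B β) =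
      tup β τ₁ (upd (vn ζ i A X Y p) x₀ Y)) :
    pmap β _ _ (Dmid ζ ξ i A τ₁ σ₂ f β hcomm (Function.update p x₀ true) q hv') =
      eqToHom eGY ≫
        tupMVHom β τ₁ (vn ζ i A X Y p) x₀ (fun _ => Y) (fun s => bif s then Y else X) f (𝟙 Y) ≫
        pmap β _ _ (DmPart ζ ξ i A f τ₁ σ₂ p q x₀ hζ hq1 hq0 hv hcomm) := by
  funext j
  show toSignHom (Dmid ζ ξ i A τ₁ σ₂ f β hcomm (Function.update p x₀ true) q hv' j) =
    (eqToHom eGY) j ≫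
      tupMVHom β τ₁ (vn ζ i A X Y p) x₀ (fun _ => Y) (fun s => bif s then Y else X) f (𝟙 Y) j ≫
      toSignHom (DmPart ζ ξ i A f τ₁ σ₂ p q x₀ hζ hq1 hq0 hv hcomm j)
  rw [eqToHom_pi β _ _ eGY j, ← toSignHom_sEq (β j) (hUY (τ₁ j)) (congrFun eGY j)]
  by_cases hc : τ₁ j = x₀
  · rw [tupMVHom_app_pos β τ₁ (vn ζ i A X Y p) x₀ (fun _ => Y) (fun s => bif s then Y else X)
      f (𝟙 Y) j hc, ← toSignHom_scomp, ← toSignHom_scomp]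
    apply congrArg toSignHom
    have hj : ζ (τ₁ j) = i := (congrArg ζ hc).trans hζ
    have hpj : Function.update p x₀ true (τ₁ j) = true := by rw [hc]; simp
    simp only [Dmid, DmPart, dif_pos hc]
    rw [condS_pos (h := hj)]
    apply eq_of_heq
    refine HEq.symm (HEq.trans (HEq.trans (HEq.trans (HEq.trans
      (sEq_scomp_heq (hUY (τ₁ j)) _)
      (scomp_hcongr (if_pos hc) (if_pos hc)
        (show vm ξ i A X Y q (σ₂ j) = bv X Y (q (σ₂ j)) by
          rw [vm, if_pos ((hcomm j).symm.trans hj)])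
        (sCast_heq _ _ _) (sCast_heq _ _ _)))
      (sbv_fireY f (q (σ₂ j)) (β j) (fun hs _ => hq1 j hc hs)
        (fun _ _ => rfl) (fun hs => hq1 j hc hs) (fun hs => hq0 j hc hs)).symm)
      (sbv_hcongr f hpj.symm rfl (β j)))
      (sCast_heq _ _ _).symm)
  · rw [tupMVHom_app_neg β τ₁ (vn ζ i A X Y p) x₀ (fun _ => Y) (fun s => bif s then Y else X)
      f (𝟙 Y) j hc, ← toSignHom_scomp, ← toSignHom_scomp]
    apply congrArg toSignHom
    simp only [DmPart, dif_neg hc]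
    apply eq_of_heq
    refine HEq.symm (HEq.trans (HEq.trans (HEq.trans
      (sEq_scomp_heq (hUY (τ₁ j)) _)
      (signId_sCast_scomp_heq _ _ _))
      (sCast_heq _ _ _))
      (Dmid_hcongr ζ ξ i A f τ₁ σ₂ hcomm p (Function.update p x₀ true) q q hv hv' j
        (fun _ => (Function.update_of_ne hc true p).symm) (fun _ => rfl)))

theorem MM_step_phi (x₀ : Fin n) (φ : Transf α β F G σ₁ τ₁) (ψ : Transf β γ G H σ₂ τ₂)
    (hφ : DinatAt φ x₀) (hcomm : ∀ j, ζ (τ₁ j) = ξ (σ₂ j))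
    (p : Fin n → Bool) (q : Fin m → Bool) (hv : Valid' ζ i β τ₁ σ₂ p q)
    (hζ : ζ x₀ = i) (hp : p x₀ = false)
    (hq1 : ∀ j : Fin wb, τ₁ j = x₀ → β j = true → q (σ₂ j) = true)
    (hv' : Valid' ζ i β τ₁ σ₂ (Function.update p x₀ true) q) :
    MM ζ ξ i A σ₁ τ₁ σ₂ τ₂ f φ ψ hcomm p q hv =
      MM ζ ξ i A σ₁ τ₁ σ₂ τ₂ f φ ψ hcomm (Function.update p x₀ true) q hv' := by
  have hq0 : ∀ j : Fin wb, τ₁ j = x₀ → β j = false → q (σ₂ j) = false := by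
    intro j hj hβ
    cases hqv : q (σ₂ j) with
    | false => rfl
    | true =>
      have h2 := (hv j ((congrArg ζ hj).trans hζ)).2 hβ hqv
      rw [hj, hp] at h2
      exact h2.symm
  have hUX : ∀ x, upd (vn ζ i A X Y p) x₀ X x = vn ζ i A X Y p x := by
    intro x
    by_cases hx : x = x₀
    · subst hx; simp [vn, hζ, hp, bv]
    · simp [hx]
  have hUY : ∀ x, upd (vn ζ i A X Y p) x₀ Y x =
      vn ζ i A X Y (Function.update p x₀ true) x := by
    intro x
    by_cases hx : x = x₀
    · subst hx; simp [vn, hζ, bv]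
    · simp [upd, hx, vn, Function.update_of_ne hx]
  have eFX : (tup α σ₁ (upd (vn ζ i A X Y p) x₀ X) : PowCat B α) =
      tup α σ₁ (vn ζ i A X Y p) := by
    funext j; exact congrArg (toSign (α j)) (hUX (σ₁ j))
  have eFY : (tup α σ₁ (upd (vn ζ i A X Y p) x₀ Y) : PowCat B α) =
      tup α σ₁ (vn ζ i A X Y (Function.update p x₀ true)) := by
    funext j; exact congrArg (toSign (α j)) (hUY (σ₁ j))
  have eGX : (tup β τ₁ (vn ζ i A X Y p) : PowCat B β) =
      tup β τ₁ (upd (vn ζ i A X Y p) x₀ X) := by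
    funext j; exact congrArg (toSign (β j)) (hUX (τ₁ j)).symm
  have eGY : (tup β τ₁ (vn ζ i A X Y (Function.update p x₀ true)) : PowCat B β) =
      tup β τ₁ (upd (vn ζ i A X Y p) x₀ Y) := by
    funext j; exact congrArg (toSign (β j)) (hUY (τ₁ j)).symm
  simp only [MM]
  rw [K1 ζ i A f σ₁ p x₀ hζ hp hUX eFX,
    K2 ζ ξ i A f τ₁ σ₂ p q hv x₀ hζ hp hcomm hq1 hq0 (fun x => (hUX x).symm) eGX,
    K1Y ζ i A f σ₁ p x₀ hζ hUY eFY,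
    K2Y ζ ξ i A f τ₁ σ₂ p q x₀ hv hv' hζ hcomm hq1 hq0 (fun x => (hUY x).symm) eGY]
  simp only [Functor.map_comp, Category.assoc, eqToHom_map]
  rw [transf_conj φ (funext hUX).symm, transf_conj φ (funext hUY).symm]
  rw [reassoc_of% (hφ (vn ζ i A X Y p) f)]

end StepPhi
section StepPsi

variable {B : Type u} [Category.{v} B] {C : Type u'} [Category.{v'} C]
  {wa wb wc n m l : ℕ}
  {α : Fin wa → Bool} {β : Fin wb → Bool} {γ : Fin wc → Bool}
  {F : PowCat B α ⥤ C} {G : PowCat B β ⥤ C} {H : PowCat B γ ⥤ C}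
  (ζ : Fin n → Fin l) (ξ : Fin m → Fin l) (i : Fin l) (A : Fin l → B) {X Y : B} (f : X ⟶ Y)
  (σ₁ : Fin wa → Fin n) (τ₁ : Fin wb → Fin n) (σ₂ : Fin wb → Fin m) (τ₂ : Fin wc → Fin m)

/-- Middle-to-hexagon entry family on the `G` side, for firing `y₀`. -/
def DmPart2 (p : Fin n → Bool) (q : Fin m → Bool) (y₀ : Fin m) (hξ : ξ y₀ = i)
    (hp1 : ∀ j : Fin wb, σ₂ j = y₀ → β j = false → p (τ₁ j) = true)
    (hp0 : ∀ j : Fin wb, σ₂ j = y₀ → β j = true → p (τ₁ j) = false)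
    (hv : Valid' ζ i β τ₁ σ₂ p q) (hcomm : ∀ j, ζ (τ₁ j) = ξ (σ₂ j)) (j : Fin wb) :
    SignHom (β j) (vn ζ i A X Y p (τ₁ j))
      (if σ₂ j = y₀ then (bif β j then X else Y) else vm ξ i A X Y q (σ₂ j)) :=
  if h : σ₂ j = y₀ then
    sCast (show bv X Y (p (τ₁ j)) = vn ζ i A X Y p (τ₁ j) by
        rw [vn, if_pos ((hcomm j).trans ((congrArg ξ h).trans hξ))])
      (if_pos h).symm
      (fireMid2 f (p (τ₁ j)) (β j) (fun hs => hp0 j h hs) (fun hs => hp1 j h hs))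
  else sCast rfl (if_neg h).symm (Dmid ζ ξ i A τ₁ σ₂ f β hcomm p q hv j)

/-- Hexagon-to-boundary entry family on the `H` side, for firing `y₀`. -/
def DcPart (q : Fin m → Bool) (y₀ : Fin m) (hξ : ξ y₀ = i) (j : Fin wc) :
    SignHom (γ j) (if τ₂ j = y₀ then (bif γ j then Y else X) else vm ξ i A X Y q (τ₂ j))
      (if ξ (τ₂ j) = i then (bif γ j then Y else X) else A (ξ (τ₂ j))) :=
  if h : τ₂ j = y₀ then
    sCast (if_pos h).symm (if_pos ((congrArg ξ h).trans hξ)).symm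
      (signId (γ j) (bif γ j then Y else X))
  else sCast (if_neg h).symm rfl (DcTgt ξ i A τ₂ f γ q j)

theorem K3 (p : Fin n → Bool) (q : Fin m → Bool) (hv : Valid' ζ i β τ₁ σ₂ p q)
    (y₀ : Fin m) (hξ : ξ y₀ = i) (hq : q y₀ = false) (hcomm : ∀ j, ζ (τ₁ j) = ξ (σ₂ j))
    (hp1 : ∀ j : Fin wb, σ₂ j = y₀ → β j = false → p (τ₁ j) = true)
    (hp0 : ∀ j : Fin wb, σ₂ j = y₀ → β j = true → p (τ₁ j) = false)
    (hUX : ∀ y, upd (vm ξ i A X Y q) y₀ X y = vm ξ i A X Y q y)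
    (eH : (tup β σ₂ (upd (vm ξ i A X Y q) y₀ X) : PowCat B β) = tup β σ₂ (vm ξ i A X Y q)) :
    pmap β _ _ (Dmid ζ ξ i A τ₁ σ₂ f β hcomm p q hv) =
      pmap β _ _ (DmPart2 ζ ξ i A f τ₁ σ₂ p q y₀ hξ hp1 hp0 hv hcomm) ≫
        tupMVHom β σ₂ (vm ξ i A X Y q) y₀ (fun s => bif s then X else Y) (fun _ => X) f (𝟙 X) ≫
        eqToHom eH := by
  funext j
  show toSignHom (Dmid ζ ξ i A τ₁ σ₂ f β hcomm p q hv j) =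
    toSignHom (DmPart2 ζ ξ i A f τ₁ σ₂ p q y₀ hξ hp1 hp0 hv hcomm j) ≫
      tupMVHom β σ₂ (vm ξ i A X Y q) y₀ (fun s => bif s then X else Y) (fun _ => X) f (𝟙 X) j ≫
      (eqToHom eH) j
  rw [eqToHom_pi β _ _ eH j, ← toSignHom_sEq (β j) (hUX (σ₂ j)) (congrFun eH j)]
  by_cases hc : σ₂ j = y₀
  · rw [tupMVHom_app_pos β σ₂ (vm ξ i A X Y q) y₀ (fun s => bif s then X else Y) (fun _ => X)
      f (𝟙 X) j hc, ← toSignHom_scomp, ← toSignHom_scomp]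
    apply congrArg toSignHom
    have hjξ : ξ (σ₂ j) = i := (congrArg ξ hc).trans hξ
    have hj : ζ (τ₁ j) = i := (hcomm j).trans hjξ
    have hqj : q (σ₂ j) = false := (congrArg q hc).trans hq
    simp only [Dmid, DmPart2, dif_pos hc]
    rw [condS_pos (h := hj)]
    apply eq_of_heq
    refine HEq.symm (HEq.trans (HEq.trans (HEq.trans (HEq.trans
      (scomp_hcongr rfl rfl (hUX (σ₂ j)).symm HEq.rfl (scomp_sEq_heq _ (hUX (σ₂ j))))
      (scomp_hcongr
        (show vn ζ i A X Y p (τ₁ j) = bv X Y (p (τ₁ j)) by rw [vn, if_pos hj])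
        (if_pos hc) (if_pos hc) (sCast_heq _ _ _) (sCast_heq _ _ _)))
      (sbv_fire2X f (p (τ₁ j)) (β j) (fun hs hb => (hp0 j hc hs) ▸ hb)
        (fun _ hb => absurd hb (by simp)) (fun hs => hp0 j hc hs) (fun hs => hp1 j hc hs)).symm)
      (sbv_hcongr f rfl hqj.symm (β j)))
      (sCast_heq _ _ _).symm)
  · rw [tupMVHom_app_neg β σ₂ (vm ξ i A X Y q) y₀ (fun s => bif s then X else Y) (fun _ => X)
      f (𝟙 X) j hc, ← toSignHom_scomp, ← toSignHom_scomp]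
    apply congrArg toSignHom
    simp only [DmPart2, dif_neg hc]
    apply eq_of_heq
    refine HEq.symm (HEq.trans (HEq.trans
      (scomp_hcongr rfl rfl (hUX (σ₂ j)).symm HEq.rfl (scomp_sEq_heq _ (hUX (σ₂ j))))
      (scomp_sCast_signId_heq _ _ _))
      (sCast_heq _ _ _))

theorem K3Y (p : Fin n → Bool) (q : Fin m → Bool) (y₀ : Fin m)
    (hv : Valid' ζ i β τ₁ σ₂ p q)
    (hv' : Valid' ζ i β τ₁ σ₂ p (Function.update q y₀ true))
    (hξ : ξ y₀ = i) (hcomm : ∀ j, ζ (τ₁ j) = ξ (σ₂ j))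
    (hp1 : ∀ j : Fin wb, σ₂ j = y₀ → β j = false → p (τ₁ j) = true)
    (hp0 : ∀ j : Fin wb, σ₂ j = y₀ → β j = true → p (τ₁ j) = false)
    (hUY : ∀ y, upd (vm ξ i A X Y q) y₀ Y y = vm ξ i A X Y (Function.update q y₀ true) y)
    (eHY : (tup β σ₂ (upd (vm ξ i A X Y q) y₀ Y) : PowCat B β) =
      tup β σ₂ (vm ξ i A X Y (Function.update q y₀ true))) :
    pmap β _ _ (Dmid ζ ξ i A τ₁ σ₂ f β hcomm p (Function.update q y₀ true) hv') =
      pmap β _ _ (DmPart2 ζ ξ i A f τ₁ σ₂ p q y₀ hξ hp1 hp0 hv hcomm) ≫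
        tupMVHom β σ₂ (vm ξ i A X Y q) y₀ (fun s => bif s then X else Y) (fun _ => Y) (𝟙 Y) f ≫
        eqToHom eHY := by
  funext j
  show toSignHom (Dmid ζ ξ i A τ₁ σ₂ f β hcomm p (Function.update q y₀ true) hv' j) =
    toSignHom (DmPart2 ζ ξ i A f τ₁ σ₂ p q y₀ hξ hp1 hp0 hv hcomm j) ≫
      tupMVHom β σ₂ (vm ξ i A X Y q) y₀ (fun s => bif s then X else Y) (fun _ => Y) (𝟙 Y) f j ≫
      (eqToHom eHY) j
  rw [eqToHom_pi β _ _ eHY j, ← toSignHom_sEq (β j) (hUY (σ₂ j)) (congrFun eHY j)]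
  by_cases hc : σ₂ j = y₀
  · rw [tupMVHom_app_pos β σ₂ (vm ξ i A X Y q) y₀ (fun s => bif s then X else Y) (fun _ => Y)
      (𝟙 Y) f j hc, ← toSignHom_scomp, ← toSignHom_scomp]
    apply congrArg toSignHom
    have hjξ : ξ (σ₂ j) = i := (congrArg ξ hc).trans hξ
    have hj : ζ (τ₁ j) = i := (hcomm j).trans hjξ
    have hqj : Function.update q y₀ true (σ₂ j) = true := by rw [hc]; simp
    simp only [Dmid, DmPart2, dif_pos hc]
    rw [condS_pos (h := hj)]
    apply eq_of_heq
    refine HEq.symm (HEq.trans (HEq.trans (HEq.trans (HEq.trans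
      (scomp_hcongr rfl rfl (hUY (σ₂ j)).symm HEq.rfl (scomp_sEq_heq _ (hUY (σ₂ j))))
      (scomp_hcongr
        (show vn ζ i A X Y p (τ₁ j) = bv X Y (p (τ₁ j)) by rw [vn, if_pos hj])
        (if_pos hc) (if_pos hc) (sCast_heq _ _ _) (sCast_heq _ _ _)))
      (sbv_fire2Y f (p (τ₁ j)) (β j) (fun _ _ => rfl)
        (fun hs _ => hp1 j hc hs) (fun hs => hp0 j hc hs) (fun hs => hp1 j hc hs)).symm)
      (sbv_hcongr f rfl hqj.symm (β j)))
      (sCast_heq _ _ _).symm)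
  · rw [tupMVHom_app_neg β σ₂ (vm ξ i A X Y q) y₀ (fun s => bif s then X else Y) (fun _ => Y)
      (𝟙 Y) f j hc, ← toSignHom_scomp, ← toSignHom_scomp]
    apply congrArg toSignHom
    simp only [DmPart2, dif_neg hc]
    apply eq_of_heq
    refine HEq.symm (HEq.trans (HEq.trans (HEq.trans
      (scomp_hcongr rfl rfl (hUY (σ₂ j)).symm HEq.rfl (scomp_sEq_heq _ (hUY (σ₂ j))))
      (scomp_sCast_signId_heq _ _ _))
      (sCast_heq _ _ _))
      (Dmid_hcongr ζ ξ i A f τ₁ σ₂ hcomm p p q (Function.update q y₀ true) hv hv' j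
        (fun _ => rfl) (fun _ => (Function.update_of_ne hc true q).symm)))

theorem K4 (q : Fin m → Bool) (y₀ : Fin m) (hξ : ξ y₀ = i) (hq : q y₀ = false)
    (hUX : ∀ y, vm ξ i A X Y q y = upd (vm ξ i A X Y q) y₀ X y)
    (eW : (tup γ τ₂ (vm ξ i A X Y q) : PowCat B γ) = tup γ τ₂ (upd (vm ξ i A X Y q) y₀ X)) :
    pmap γ _ _ (DcTgt ξ i A τ₂ f γ q) =
      eqToHom eW ≫
        tupMVHom γ τ₂ (vm ξ i A X Y q) y₀ (fun _ => X) (fun s => bif s then Y else X) (𝟙 X) f ≫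
        pmap γ _ _ (DcPart ξ i A f τ₂ q y₀ hξ) := by
  funext j
  show toSignHom (DcTgt ξ i A τ₂ f γ q j) =
    (eqToHom eW) j ≫
      tupMVHom γ τ₂ (vm ξ i A X Y q) y₀ (fun _ => X) (fun s => bif s then Y else X) (𝟙 X) f j ≫
      toSignHom (DcPart ξ i A f τ₂ q y₀ hξ j)
  rw [eqToHom_pi γ _ _ eW j, ← toSignHom_sEq (γ j) (hUX (τ₂ j)) (congrFun eW j)]
  by_cases hc : τ₂ j = y₀
  · rw [tupMVHom_app_pos γ τ₂ (vm ξ i A X Y q) y₀ (fun _ => X) (fun s => bif s then Y else X)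
      (𝟙 X) f j hc, ← toSignHom_scomp, ← toSignHom_scomp]
    apply congrArg toSignHom
    have hjξ : ξ (τ₂ j) = i := (congrArg ξ hc).trans hξ
    have hqj : q (τ₂ j) = false := (congrArg q hc).trans hq
    simp only [DcTgt, DcPart, dif_pos hc]
    rw [condS_pos (h := hjξ)]
    apply eq_of_heq
    refine HEq.symm (HEq.trans (HEq.trans (HEq.trans (HEq.trans (HEq.trans
      (sEq_scomp_heq (hUX (τ₂ j)) _)
      (scomp_sCast_signId_heq _ _ _))
      (sCast_heq _ _ _))
      (mvHom_tgtS_false f (γ j)))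
      (tgtS_hcongr f hqj.symm (γ j)))
      (sCast_heq _ _ _).symm)
  · rw [tupMVHom_app_neg γ τ₂ (vm ξ i A X Y q) y₀ (fun _ => X) (fun s => bif s then Y else X)
      (𝟙 X) f j hc, ← toSignHom_scomp, ← toSignHom_scomp]
    apply congrArg toSignHom
    simp only [DcPart, dif_neg hc]
    apply eq_of_heq
    refine HEq.symm (HEq.trans (HEq.trans
      (sEq_scomp_heq (hUX (τ₂ j)) _)
      (signId_sCast_scomp_heq _ _ _))
      (sCast_heq _ _ _))

theorem K4Y (q : Fin m → Bool) (y₀ : Fin m) (hξ : ξ y₀ = i)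
    (hUY : ∀ y, vm ξ i A X Y (Function.update q y₀ true) y = upd (vm ξ i A X Y q) y₀ Y y)
    (eWY : (tup γ τ₂ (vm ξ i A X Y (Function.update q y₀ true)) : PowCat B γ) =
      tup γ τ₂ (upd (vm ξ i A X Y q) y₀ Y)) :
    pmap γ _ _ (DcTgt ξ i A τ₂ f γ (Function.update q y₀ true)) =
      eqToHom eWY ≫
        tupMVHom γ τ₂ (vm ξ i A X Y q) y₀ (fun _ => Y) (fun s => bif s then Y else X) f (𝟙 Y) ≫
        pmap γ _ _ (DcPart ξ i A f τ₂ q y₀ hξ) := by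
  funext j
  show toSignHom (DcTgt ξ i A τ₂ f γ (Function.update q y₀ true) j) =
    (eqToHom eWY) j ≫
      tupMVHom γ τ₂ (vm ξ i A X Y q) y₀ (fun _ => Y) (fun s => bif s then Y else X) f (𝟙 Y) j ≫
      toSignHom (DcPart ξ i A f τ₂ q y₀ hξ j)
  rw [eqToHom_pi γ _ _ eWY j, ← toSignHom_sEq (γ j) (hUY (τ₂ j)) (congrFun eWY j)]
  by_cases hc : τ₂ j = y₀
  · rw [tupMVHom_app_pos γ τ₂ (vm ξ i A X Y q) y₀ (fun _ => Y) (fun s => bif s then Y else X)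
      f (𝟙 Y) j hc, ← toSignHom_scomp, ← toSignHom_scomp]
    apply congrArg toSignHom
    have hjξ : ξ (τ₂ j) = i := (congrArg ξ hc).trans hξ
    have hqj : Function.update q y₀ true (τ₂ j) = true := by rw [hc]; simp
    simp only [DcTgt, DcPart, dif_pos hc]
    rw [condS_pos (h := hjξ)]
    apply eq_of_heq
    refine HEq.symm (HEq.trans (HEq.trans (HEq.trans (HEq.trans (HEq.trans
      (sEq_scomp_heq (hUY (τ₂ j)) _)
      (scomp_sCast_signId_heq _ _ _))
      (sCast_heq _ _ _))
      (mvHom_tgtS_true f (γ j)))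
      (tgtS_hcongr f hqj.symm (γ j)))
      (sCast_heq _ _ _).symm)
  · rw [tupMVHom_app_neg γ τ₂ (vm ξ i A X Y q) y₀ (fun _ => Y) (fun s => bif s then Y else X)
      f (𝟙 Y) j hc, ← toSignHom_scomp, ← toSignHom_scomp]
    apply congrArg toSignHom
    simp only [DcPart, dif_neg hc]
    apply eq_of_heq
    refine HEq.symm (HEq.trans (HEq.trans (HEq.trans
      (sEq_scomp_heq (hUY (τ₂ j)) _)
      (signId_sCast_scomp_heq _ _ _))
      (sCast_heq _ _ _))
      (DcTgt_hcongr ξ i A f τ₂ q (Function.update q y₀ true) j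
        (fun _ => (Function.update_of_ne hc true q).symm)))

theorem MM_step_psi (y₀ : Fin m) (φ : Transf α β F G σ₁ τ₁) (ψ : Transf β γ G H σ₂ τ₂)
    (hψ : DinatAt ψ y₀) (hcomm : ∀ j, ζ (τ₁ j) = ξ (σ₂ j))
    (p : Fin n → Bool) (q : Fin m → Bool) (hv : Valid' ζ i β τ₁ σ₂ p q)
    (hξ : ξ y₀ = i) (hq : q y₀ = false)
    (hp1 : ∀ j : Fin wb, σ₂ j = y₀ → β j = false → p (τ₁ j) = true)
    (hv' : Valid' ζ i β τ₁ σ₂ p (Function.update q y₀ true)) :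
    MM ζ ξ i A σ₁ τ₁ σ₂ τ₂ f φ ψ hcomm p q hv =
      MM ζ ξ i A σ₁ τ₁ σ₂ τ₂ f φ ψ hcomm p (Function.update q y₀ true) hv' := by
  have hp0 : ∀ j : Fin wb, σ₂ j = y₀ → β j = true → p (τ₁ j) = false := by
    intro j hj hβ
    cases hpv : p (τ₁ j) with
    | false => rfl
    | true =>
      have h2 := (hv j ((hcomm j).trans ((congrArg ξ hj).trans hξ))).1 hβ hpv
      rw [hj, hq] at h2
      exact h2.symm
  have hUX : ∀ y, upd (vm ξ i A X Y q) y₀ X y = vm ξ i A X Y q y := by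
    intro y
    by_cases hy : y = y₀
    · subst hy; simp [vm, hξ, hq, bv]
    · simp [hy]
  have hUY : ∀ y, upd (vm ξ i A X Y q) y₀ Y y =
      vm ξ i A X Y (Function.update q y₀ true) y := by
    intro y
    by_cases hy : y = y₀
    · subst hy; simp [vm, hξ, bv]
    · simp [upd, hy, vm, Function.update_of_ne hy]
  have eH : (tup β σ₂ (upd (vm ξ i A X Y q) y₀ X) : PowCat B β) =
      tup β σ₂ (vm ξ i A X Y q) := by
    funext j; exact congrArg (toSign (β j)) (hUX (σ₂ j))
  have eHY : (tup β σ₂ (upd (vm ξ i A X Y q) y₀ Y) : PowCat B β) =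
      tup β σ₂ (vm ξ i A X Y (Function.update q y₀ true)) := by
    funext j; exact congrArg (toSign (β j)) (hUY (σ₂ j))
  have eW : (tup γ τ₂ (vm ξ i A X Y q) : PowCat B γ) =
      tup γ τ₂ (upd (vm ξ i A X Y q) y₀ X) := by
    funext j; exact congrArg (toSign (γ j)) (hUX (τ₂ j)).symm
  have eWY : (tup γ τ₂ (vm ξ i A X Y (Function.update q y₀ true)) : PowCat B γ) =
      tup γ τ₂ (upd (vm ξ i A X Y q) y₀ Y) := by
    funext j; exact congrArg (toSign (γ j)) (hUY (τ₂ j)).symm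
  simp only [MM]
  rw [K3 ζ ξ i A f τ₁ σ₂ p q hv y₀ hξ hq hcomm hp1 hp0 hUX eH,
    K4 ξ i A f τ₂ q y₀ hξ hq (fun y => (hUX y).symm) eW,
    K3Y ζ ξ i A f τ₁ σ₂ p q y₀ hv hv' hξ hcomm hp1 hp0 hUY eHY,
    K4Y ξ i A f τ₂ q y₀ hξ (fun y => (hUY y).symm) eWY]
  simp only [Functor.map_comp, Category.assoc, eqToHom_map]
  rw [transf_conj ψ (funext hUX).symm, transf_conj ψ (funext hUY).symm]
  rw [reassoc_of% (hψ (vm ξ i A X Y q) f)]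

end StepPsi
section StepOff

variable {B : Type u} [Category.{v} B] {C : Type u'} [Category.{v'} C]
  {wa wb wc n m l : ℕ}
  {α : Fin wa → Bool} {β : Fin wb → Bool} {γ : Fin wc → Bool}
  {F : PowCat B α ⥤ C} {G : PowCat B β ⥤ C} {H : PowCat B γ ⥤ C}
  (ζ : Fin n → Fin l) (ξ : Fin m → Fin l) (i : Fin l) (A : Fin l → B) {X Y : B} (f : X ⟶ Y)
  (σ₁ : Fin wa → Fin n) (τ₁ : Fin wb → Fin n) (σ₂ : Fin wb → Fin m) (τ₂ : Fin wc → Fin m)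

theorem MM_step_phi_off (x₀ : Fin n) (φ : Transf α β F G σ₁ τ₁) (ψ : Transf β γ G H σ₂ τ₂)
    (hcomm : ∀ j, ζ (τ₁ j) = ξ (σ₂ j))
    (p : Fin n → Bool) (q : Fin m → Bool) (hv : Valid' ζ i β τ₁ σ₂ p q)
    (hζ : ¬ ζ x₀ = i)
    (hv' : Valid' ζ i β τ₁ σ₂ (Function.update p x₀ true) q) :
    MM ζ ξ i A σ₁ τ₁ σ₂ τ₂ f φ ψ hcomm p q hv =
      MM ζ ξ i A σ₁ τ₁ σ₂ τ₂ f φ ψ hcomm (Function.update p x₀ true) q hv' := by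
  have hVV : ∀ x, vn ζ i A X Y p x = vn ζ i A X Y (Function.update p x₀ true) x := by
    intro x
    by_cases hx : x = x₀
    · subst hx; simp [vn, hζ]
    · simp [vn, Function.update_of_ne hx]
  have hpp : ∀ x, ζ x = i → p x = Function.update p x₀ true x := by
    intro x hx
    have hne : x ≠ x₀ := fun h => hζ (h ▸ hx)
    rw [Function.update_of_ne hne]
  have Ea : (tup α σ₁ (vn ζ i A X Y p) : PowCat B α) =
      tup α σ₁ (vn ζ i A X Y (Function.update p x₀ true)) := by
    funext j; exact congrArg (toSign (α j)) (hVV (σ₁ j))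
  have Eb : (tup β τ₁ (vn ζ i A X Y (Function.update p x₀ true)) : PowCat B β) =
      tup β τ₁ (vn ζ i A X Y p) := by
    funext j; exact congrArg (toSign (β j)) (hVV (τ₁ j)).symm
  have O1 : pmap α _ _ (DaSrc ζ i A σ₁ f α (Function.update p x₀ true)) =
      pmap α _ _ (DaSrc ζ i A σ₁ f α p) ≫ eqToHom Ea := by
    rw [pmap_comp_eqToHom α _ _ _ _ (fun j => hVV (σ₁ j)) Ea]
    apply pmap_ext
    intro j
    exact eq_of_heq ((scomp_sEq_heq _ _).trans
      (DaSrc_hcongr ζ i A f σ₁ p (Function.update p x₀ true) j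
        (fun hj => hpp (σ₁ j) hj))).symm
  have O2 : pmap β _ _ (Dmid ζ ξ i A τ₁ σ₂ f β hcomm (Function.update p x₀ true) q hv') =
      eqToHom Eb ≫ pmap β _ _ (Dmid ζ ξ i A τ₁ σ₂ f β hcomm p q hv) := by
    rw [eqToHom_comp_pmap β _ _ _ _ (fun j => (hVV (τ₁ j)).symm) Eb]
    apply pmap_ext
    intro j
    exact eq_of_heq ((sEq_scomp_heq _ _).trans
      (Dmid_hcongr ζ ξ i A f τ₁ σ₂ hcomm p (Function.update p x₀ true) q q hv hv' j
        (fun hj => hpp (τ₁ j) hj) (fun _ => rfl))).symm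
  simp only [MM]
  rw [O1, O2]
  simp only [Functor.map_comp, Category.assoc, eqToHom_map]
  rw [transf_conj φ (funext hVV).symm]

theorem MM_step_psi_off (y₀ : Fin m) (φ : Transf α β F G σ₁ τ₁) (ψ : Transf β γ G H σ₂ τ₂)
    (hcomm : ∀ j, ζ (τ₁ j) = ξ (σ₂ j))
    (p : Fin n → Bool) (q : Fin m → Bool) (hv : Valid' ζ i β τ₁ σ₂ p q)
    (hξ : ¬ ξ y₀ = i)
    (hv' : Valid' ζ i β τ₁ σ₂ p (Function.update q y₀ true)) :
    MM ζ ξ i A σ₁ τ₁ σ₂ τ₂ f φ ψ hcomm p q hv =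
      MM ζ ξ i A σ₁ τ₁ σ₂ τ₂ f φ ψ hcomm p (Function.update q y₀ true) hv' := by
  have hVV : ∀ y, vm ξ i A X Y q y = vm ξ i A X Y (Function.update q y₀ true) y := by
    intro y
    by_cases hy : y = y₀
    · subst hy; simp [vm, hξ]
    · simp [vm, Function.update_of_ne hy]
  have hqq : ∀ y, ξ y = i → q y = Function.update q y₀ true y := by
    intro y hy
    have hne : y ≠ y₀ := fun h => hξ (h ▸ hy)
    rw [Function.update_of_ne hne]
  have Ea : (tup β σ₂ (vm ξ i A X Y q) : PowCat B β) =
      tup β σ₂ (vm ξ i A X Y (Function.update q y₀ true)) := by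
    funext j; exact congrArg (toSign (β j)) (hVV (σ₂ j))
  have Eb : (tup γ τ₂ (vm ξ i A X Y (Function.update q y₀ true)) : PowCat B γ) =
      tup γ τ₂ (vm ξ i A X Y q) := by
    funext j; exact congrArg (toSign (γ j)) (hVV (τ₂ j)).symm
  have O1 : pmap β _ _ (Dmid ζ ξ i A τ₁ σ₂ f β hcomm p (Function.update q y₀ true) hv') =
      pmap β _ _ (Dmid ζ ξ i A τ₁ σ₂ f β hcomm p q hv) ≫ eqToHom Ea := by
    rw [pmap_comp_eqToHom β _ _ _ _ (fun j => hVV (σ₂ j)) Ea]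
    apply pmap_ext
    intro j
    exact eq_of_heq ((scomp_sEq_heq _ _).trans
      (Dmid_hcongr ζ ξ i A f τ₁ σ₂ hcomm p p q (Function.update q y₀ true) hv hv' j
        (fun _ => rfl) (fun hj => hqq (σ₂ j) ((hcomm j).symm ▸ hj)))).symm
  have O2 : pmap γ _ _ (DcTgt ξ i A τ₂ f γ (Function.update q y₀ true)) =
      eqToHom Eb ≫ pmap γ _ _ (DcTgt ξ i A τ₂ f γ q) := by
    rw [eqToHom_comp_pmap γ _ _ _ _ (fun j => (hVV (τ₂ j)).symm) Eb]
    apply pmap_ext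
    intro j
    exact eq_of_heq ((sEq_scomp_heq _ _).trans
      (DcTgt_hcongr ξ i A f τ₂ q (Function.update q y₀ true) j
        (fun hj => hqq (τ₂ j) hj))).symm
  simp only [MM]
  rw [O1, O2]
  simp only [Functor.map_comp, Category.assoc, eqToHom_map]
  rw [transf_conj ψ (funext hVV).symm]

end StepOff
section Final

variable {B : Type u} [Category.{v} B] {C : Type u'} [Category.{v'} C]
  {wa wb wc n m l : ℕ}
  {α : Fin wa → Bool} {β : Fin wb → Bool} {γ : Fin wc → Bool}
  {F : PowCat B α ⥤ C} {G : PowCat B β ⥤ C} {H : PowCat B γ ⥤ C}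
  (ζ : Fin n → Fin l) (ξ : Fin m → Fin l) (i : Fin l) (A : Fin l → B) {X Y : B} (f : X ⟶ Y)
  (σ₁ : Fin wa → Fin n) (τ₁ : Fin wb → Fin n) (σ₂ : Fin wb → Fin m) (τ₂ : Fin wc → Fin m)

/-- The induced edge relation on transitions of the composite graph. -/
def ERel (β : Fin wb → Bool) (τ₁ : Fin wb → Fin n) (σ₂ : Fin wb → Fin m) :
    (Fin n ⊕ Fin m) → (Fin n ⊕ Fin m) → Prop
  | .inl x, .inr y => ∃ j, τ₁ j = x ∧ σ₂ j = y ∧ β j = true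
  | .inr y, .inl x => ∃ j, τ₁ j = x ∧ σ₂ j = y ∧ β j = false
  | _, _ => False

theorem ERel_arc (α : Fin wa → Bool) (γ : Fin wc → Bool) (t t' : Fin n ⊕ Fin m)
    (h : ERel β τ₁ σ₂ t t') :
    Relation.TransGen (compArc α β γ σ₁ τ₁ σ₂ τ₂) (.inr t) (.inr t') := by
  match t, t', h with
  | .inl x, .inr y, ⟨j, h1, h2, hβ⟩ =>
    exact Relation.TransGen.head
      (show compArc α β γ σ₁ τ₁ σ₂ τ₂ (.inr (.inl x)) (.inl (.inr (.inl j))) from ⟨h1, hβ⟩)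
      (Relation.TransGen.single
        (show compArc α β γ σ₁ τ₁ σ₂ τ₂ (.inl (.inr (.inl j))) (.inr (.inr y)) from ⟨h2, hβ⟩))
  | .inr y, .inl x, ⟨j, h1, h2, hβ⟩ =>
    exact Relation.TransGen.head
      (show compArc α β γ σ₁ τ₁ σ₂ τ₂ (.inr (.inr y)) (.inl (.inr (.inl j))) from ⟨h2, hβ⟩)
      (Relation.TransGen.single
        (show compArc α β γ σ₁ τ₁ σ₂ τ₂ (.inl (.inr (.inl j))) (.inr (.inl x)) from ⟨h1, hβ⟩))

theorem ERel_irrefl (α : Fin wa → Bool) (γ : Fin wc → Bool)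
    (hacyclic : ∀ v : CGV wa wb wc n m,
      ¬ Relation.TransGen (compArc α β γ σ₁ τ₁ σ₂ τ₂) v v) :
    ∀ t, ¬ Relation.TransGen (ERel β τ₁ σ₂) t t := by
  have lift : ∀ a b, Relation.TransGen (ERel β τ₁ σ₂) a b →
      Relation.TransGen (compArc α β γ σ₁ τ₁ σ₂ τ₂) (.inr a) (.inr b) := by
    intro a b h
    induction h with
    | single h => exact ERel_arc σ₁ τ₁ σ₂ τ₂ α γ _ _ h
    | tail _ h ih => exact ih.trans (ERel_arc σ₁ τ₁ σ₂ τ₂ α γ _ _ h)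
  intro t ht
  exact hacyclic (Sum.inr t) (lift t t ht)

theorem card_update_lt {N : ℕ} (p : Fin N → Bool) (x₀ : Fin N) (hp : p x₀ = false) :
    (Finset.filter (fun x => Function.update p x₀ true x = false) Finset.univ).card <
      (Finset.filter (fun x => p x = false) Finset.univ).card := by
  have hmem : x₀ ∈ Finset.filter (fun x => p x = false) Finset.univ := by simp [hp]
  have hset : Finset.filter (fun x => Function.update p x₀ true x = false) Finset.univ =
      (Finset.filter (fun x => p x = false) Finset.univ).erase x₀ := by
    ext x
    simp only [Finset.mem_filter, Finset.mem_erase, Finset.mem_univ, true_and]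
    by_cases hx : x = x₀
    · subst hx; simp
    · simp [Function.update_of_ne hx, hx]
  rw [hset]
  exact Finset.card_erase_lt_of_mem hmem

theorem step_case (φ : Transf α β F G σ₁ τ₁) (ψ : Transf β γ G H σ₂ τ₂)
    (hφ : ∀ x, DinatAt φ x) (hψ : ∀ y, DinatAt ψ y)
    (hcomm : ∀ j, ζ (τ₁ j) = ξ (σ₂ j))
    (hacyclic : ∀ v : CGV wa wb wc n m,
      ¬ Relation.TransGen (compArc α β γ σ₁ τ₁ σ₂ τ₂) v v)
    (hvT : Valid' ζ i β τ₁ σ₂ (fun _ => true) (fun _ => true)) (k : ℕ)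
    (ih : ∀ (p : Fin n → Bool) (q : Fin m → Bool) (hv : Valid' ζ i β τ₁ σ₂ p q),
      (Finset.filter (fun x => p x = false) Finset.univ).card +
        (Finset.filter (fun y => q y = false) Finset.univ).card ≤ k →
      MM ζ ξ i A σ₁ τ₁ σ₂ τ₂ f φ ψ hcomm p q hv =
        MM ζ ξ i A σ₁ τ₁ σ₂ τ₂ f φ ψ hcomm (fun _ => true) (fun _ => true) hvT)
    (p : Fin n → Bool) (q : Fin m → Bool) (hv : Valid' ζ i β τ₁ σ₂ p q)
    (hk : (Finset.filter (fun x => p x = false) Finset.univ).card +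
        (Finset.filter (fun y => q y = false) Finset.univ).card ≤ k + 1)
    (hne : (∃ x, p x = false) ∨ (∃ y, q y = false)) :
    MM ζ ξ i A σ₁ τ₁ σ₂ τ₂ f φ ψ hcomm p q hv =
      MM ζ ξ i A σ₁ τ₁ σ₂ τ₂ f φ ψ hcomm (fun _ => true) (fun _ => true) hvT := by
  by_cases hoffp : ∃ x, p x = false ∧ ¬ ζ x = i
  · obtain ⟨x₀, hx0, hxi⟩ := hoffp
    have hv' : Valid' ζ i β τ₁ σ₂ (Function.update p x₀ true) q := by
      intro j hj
      have hne' : τ₁ j ≠ x₀ := fun h => hxi (h ▸ hj)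
      refine ⟨fun hβ hpj => (hv j hj).1 hβ (by rwa [Function.update_of_ne hne'] at hpj),
        fun hβ hqj => by rw [Function.update_of_ne hne']; exact (hv j hj).2 hβ hqj⟩
    rw [MM_step_phi_off ζ ξ i A f σ₁ τ₁ σ₂ τ₂ x₀ φ ψ hcomm p q hv hxi hv']
    refine ih _ _ hv' ?_
    have := card_update_lt p x₀ hx0
    omega
  · by_cases hoffq : ∃ y, q y = false ∧ ¬ ξ y = i
    · obtain ⟨y₀, hy0, hyi⟩ := hoffq
      have hv' : Valid' ζ i β τ₁ σ₂ p (Function.update q y₀ true) := by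
        intro j hj
        have hne' : σ₂ j ≠ y₀ := fun h => hyi (h ▸ ((hcomm j).symm.trans hj))
        refine ⟨fun hβ hpj => by
            rw [Function.update_of_ne hne']; exact (hv j hj).1 hβ hpj,
          fun hβ hqj => (hv j hj).2 hβ (by rwa [Function.update_of_ne hne'] at hqj)⟩
      rw [MM_step_psi_off ζ ξ i A f σ₁ τ₁ σ₂ τ₂ y₀ φ ψ hcomm p q hv hyi hv']
      refine ih _ _ hv' ?_
      have := card_update_lt q y₀ hy0
      omega
    · have hwf : WellFounded (fun a b : Fin n ⊕ Fin m =>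
          Relation.TransGen (ERel β τ₁ σ₂) b a) := by
        have h1 : IsTrans (Fin n ⊕ Fin m)
            (fun a b => Relation.TransGen (ERel β τ₁ σ₂) b a) :=
          ⟨fun _ _ _ hab hbc => hbc.trans hab⟩
        have h2 : IsIrrefl (Fin n ⊕ Fin m)
            (fun a b => Relation.TransGen (ERel β τ₁ σ₂) b a) :=
          ⟨fun t => ERel_irrefl σ₁ τ₁ σ₂ τ₂ α γ hacyclic t⟩
        exact Finite.wellFounded_of_trans_of_irrefl _
      have hS : (fun t : Fin n ⊕ Fin m =>
          Sum.elim (fun x => p x = false) (fun y => q y = false) t) ≠ fun _ => False := by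
        intro hcon
        rcases hne with ⟨x, hx⟩ | ⟨y, hy⟩
        · exact (congrFun hcon (Sum.inl x)) ▸ hx
        · exact (congrFun hcon (Sum.inr y)) ▸ hy
      have hSne : {t : Fin n ⊕ Fin m |
          Sum.elim (fun x => p x = false) (fun y => q y = false) t}.Nonempty := by
        rcases hne with ⟨x, hx⟩ | ⟨y, hy⟩
        · exact ⟨Sum.inl x, hx⟩
        · exact ⟨Sum.inr y, hy⟩
      obtain ⟨t₀, ht₀S, ht₀min⟩ := hwf.has_min _ hSne
      cases t₀ with
      | inl x₀ =>
        have hx0 : p x₀ = false := ht₀S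
        have hζ0 : ζ x₀ = i := by
          by_contra h
          exact hoffp ⟨x₀, hx0, h⟩
        have hq1 : ∀ j, τ₁ j = x₀ → β j = true → q (σ₂ j) = true := by
          intro j hj hβ
          cases hqv : q (σ₂ j) with
          | true => rfl
          | false =>
            exact absurd (Relation.TransGen.single
              (show ERel β τ₁ σ₂ (.inl x₀) (.inr (σ₂ j)) from ⟨j, hj, rfl, hβ⟩))
              (ht₀min (.inr (σ₂ j)) hqv)
        have hv' : Valid' ζ i β τ₁ σ₂ (Function.update p x₀ true) q := by
          intro j hj
          constructor
          · intro hβ hpj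
            by_cases hjx : τ₁ j = x₀
            · exact hq1 j hjx hβ
            · exact (hv j hj).1 hβ (by rwa [Function.update_of_ne hjx] at hpj)
          · intro hβ hqj
            by_cases hjx : τ₁ j = x₀
            · rw [hjx]; simp
            · rw [Function.update_of_ne hjx]; exact (hv j hj).2 hβ hqj
        rw [MM_step_phi ζ ξ i A f σ₁ τ₁ σ₂ τ₂ x₀ φ ψ (hφ x₀) hcomm p q hv hζ0 hx0 hq1 hv']
        refine ih _ _ hv' ?_
        have := card_update_lt p x₀ hx0
        omega
      | inr y₀ =>
        have hy0 : q y₀ = false := ht₀S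
        have hξ0 : ξ y₀ = i := by
          by_contra h
          exact hoffq ⟨y₀, hy0, h⟩
        have hp1 : ∀ j, σ₂ j = y₀ → β j = false → p (τ₁ j) = true := by
          intro j hj hβ
          cases hpv : p (τ₁ j) with
          | true => rfl
          | false =>
            exact absurd (Relation.TransGen.single
              (show ERel β τ₁ σ₂ (.inr y₀) (.inl (τ₁ j)) from ⟨j, rfl, hj, hβ⟩))
              (ht₀min (.inl (τ₁ j)) hpv)
        have hv' : Valid' ζ i β τ₁ σ₂ p (Function.update q y₀ true) := by
          intro j hj
          constructor
          · intro hβ hpj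
            by_cases hjy : σ₂ j = y₀
            · rw [hjy]; simp
            · rw [Function.update_of_ne hjy]; exact (hv j hj).1 hβ hpj
          · intro hβ hqj
            by_cases hjy : σ₂ j = y₀
            · exact hp1 j hjy hβ
            · exact (hv j hj).2 hβ (by rwa [Function.update_of_ne hjy] at hqj)
        rw [MM_step_psi ζ ξ i A f σ₁ τ₁ σ₂ τ₂ y₀ φ ψ (hψ y₀) hcomm p q hv hξ0 hy0 hp1 hv']
        refine ih _ _ hv' ?_
        have := card_update_lt q y₀ hy0
        omega

theorem MM_walk (φ : Transf α β F G σ₁ τ₁) (ψ : Transf β γ G H σ₂ τ₂)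
    (hφ : ∀ x, DinatAt φ x) (hψ : ∀ y, DinatAt ψ y)
    (hcomm : ∀ j, ζ (τ₁ j) = ξ (σ₂ j))
    (hacyclic : ∀ v : CGV wa wb wc n m,
      ¬ Relation.TransGen (compArc α β γ σ₁ τ₁ σ₂ τ₂) v v)
    (hvT : Valid' ζ i β τ₁ σ₂ (fun _ => true) (fun _ => true)) :
    ∀ (k : ℕ) (p : Fin n → Bool) (q : Fin m → Bool) (hv : Valid' ζ i β τ₁ σ₂ p q),
      (Finset.filter (fun x => p x = false) Finset.univ).card +
        (Finset.filter (fun y => q y = false) Finset.univ).card ≤ k →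
      MM ζ ξ i A σ₁ τ₁ σ₂ τ₂ f φ ψ hcomm p q hv =
        MM ζ ξ i A σ₁ τ₁ σ₂ τ₂ f φ ψ hcomm (fun _ => true) (fun _ => true) hvT := by
  intro k
  induction k with
  | zero =>
    intro p q hv hk
    have hp : p = fun _ => true := by
      funext x
      cases hpx : p x with
      | true => rfl
      | false =>
        have hmem : x ∈ Finset.filter (fun x => p x = false) Finset.univ := by simp [hpx]
        have := Finset.card_pos.mpr ⟨x, hmem⟩
        omega
    have hq : q = fun _ => true := by
      funext y
      cases hqy : q y with
      | true => rfl
      | false =>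
        have hmem : y ∈ Finset.filter (fun y => q y = false) Finset.univ := by simp [hqy]
        have := Finset.card_pos.mpr ⟨y, hmem⟩
        omega
    subst hp; subst hq; rfl
  | succ k ih =>
    intro p q hv hk
    by_cases hallp : ∀ x, p x = true
    · by_cases hallq : ∀ y, q y = true
      · have hp : p = fun _ => true := funext hallp
        have hq : q = fun _ => true := funext hallq
        subst hp; subst hq; rfl
      · refine step_case ζ ξ i A f σ₁ τ₁ σ₂ τ₂ φ ψ hφ hψ hcomm hacyclic hvT k ih p q hv hk
          (Or.inr ?_)
        push_neg at hallq
        obtain ⟨y, hy⟩ := hallq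
        exact ⟨y, by cases hqy : q y with | true => exact absurd hqy hy | false => rfl⟩
    · refine step_case ζ ξ i A f σ₁ τ₁ σ₂ τ₂ φ ψ hφ hψ hcomm hacyclic hvT k ih p q hv hk
        (Or.inl ?_)
      push_neg at hallp
      obtain ⟨x, hx⟩ := hallp
      exact ⟨x, by cases hpx : p x with | true => exact absurd hpx hx | false => rfl⟩

end Final
/-- Let `φ : F → G` and `ψ : G → H` be transformations, dinatural in all
of their variables.  If the composite graph `Γ(ψ) ∘ Γ(φ)` is acyclic, then the vertical
composite `ψ ∘ φ` is dinatural in all of its variables. -/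
theorem vcomp_dinatural_of_acyclic
    {B : Type u} [Category.{v} B] {C : Type u'} [Category.{v'} C]
    {wa wb wc n m l : ℕ} (hn : 0 < n) (hm : 0 < m) (hl : 0 < l)
    {α : Fin wa → Bool} {β : Fin wb → Bool} {γ : Fin wc → Bool}
    {F : PowCat B α ⥤ C} {G : PowCat B β ⥤ C} {H : PowCat B γ ⥤ C}
    {σ₁ : Fin wa → Fin n} {τ₁ : Fin wb → Fin n} {σ₂ : Fin wb → Fin m} {τ₂ : Fin wc → Fin m}
    (φ : Transf α β F G σ₁ τ₁) (ψ : Transf β γ G H σ₂ τ₂)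
    (hφ : ∀ x, DinatAt φ x) (hψ : ∀ x, DinatAt ψ x)
    (ζ : Fin n → Fin l) (ξ : Fin m → Fin l)
    (hcomm : ∀ p, ζ (τ₁ p) = ξ (σ₂ p))
    (hpush : ∀ (Z : Type) (u : Fin n → Z) (v : Fin m → Z), (∀ p, u (τ₁ p) = v (σ₂ p)) →
      ∃! w : Fin l → Z, (∀ x, w (ζ x) = u x) ∧ ∀ y, w (ξ y) = v y)
    (hacyclic : ∀ v : CGV wa wb wc n m,
      ¬ Relation.TransGen (compArc α β γ σ₁ τ₁ σ₂ τ₂) v v) :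
    ∀ i, DinatAt (vcomp φ ψ ζ ξ hcomm) i := by
  intro i
  unfold DinatAt
  intro A X Y f
  have hv0 : Valid' ζ i β τ₁ σ₂ (fun _ => false) (fun _ => false) :=
    fun _ _ => ⟨fun _ h => absurd h (by simp), fun _ h => absurd h (by simp)⟩
  have hvT : Valid' ζ i β τ₁ σ₂ (fun _ => true) (fun _ => true) :=
    fun _ _ => ⟨fun _ _ => rfl, fun _ _ => rfl⟩
  rw [MM_bot ζ ξ i A f σ₁ τ₁ σ₂ τ₂ φ ψ hcomm hv0,
    MM_top ζ ξ i A f σ₁ τ₁ σ₂ τ₂ φ ψ hcomm hvT]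
  exact MM_walk ζ ξ i A f σ₁ τ₁ σ₂ τ₂ φ ψ hφ hψ hcomm hacyclic hvT _ _ _ hv0 le_rfl
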